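/- arXiv:1208.1007 — 7 statements merged into one kernel-verified Lean document; each statement's English description precedes it below -/
import Mathlib

section
/- Let $k$ be a field with $\mathrm{char}(k) \neq 2$, let $f(x)$ be a monic separable polynomial of degree $2n+1$ over $k$, let $L = k[x]/(f(x))$ with $\beta$ the image of $x$, and equip $L$ with the bilinear form $(\lambda,\nu) = \mathrm{Tr}_{L/k}(\lambda\nu/f'(\beta))$. Then the $k$-subspace $M$ of $L$ spanned by $\{1, \beta, \beta^2, \ldots, \beta^{n-1}\}$ is an isotropic subspace of dimension $n$ for this form, and moreover $\beta \cdot M \subseteq M^{\perp}$, where $M^\perp$ is the orthogonal complement of $M$. -/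
open Polynomial AdjoinRoot

lemma auxA {k : Type*} [Field k] {f : k[X]} (hf : f.Monic) (hd : 0 < f.natDegree)
    {i : ℕ} (hi : i + 1 ≤ f.natDegree - 1) (z : AdjoinRoot f) :
    (modByMonicHom hf (root f * z)).coeff (i + 1) =
      (modByMonicHom hf z).coeff i
        - (modByMonicHom hf z).coeff (f.natDegree - 1) * f.coeff (i + 1) := by
  have hdegf : f.degree = (f.natDegree : WithBot ℕ) := degree_eq_natDegree hf.ne_zero
  set p := modByMonicHom hf z with hp
  have hz : z = mk f p := (mk_leftInverse hf z).symm
  have hpdeg : p.degree < f.degree := by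
    rw [hp]
    obtain ⟨q, rfl⟩ := mk_surjective z
    rw [modByMonicHom_mk]
    exact degree_modByMonic_lt q hf
  set c := p.coeff (f.natDegree - 1) with hc
  have h1 : root f * z = mk f (X * p) := by rw [hz, ← mk_X, ← map_mul]
  have hdeg2 : (X * p - C c * f).degree < f.degree := by
    rw [hdegf, degree_lt_iff_coeff_zero]
    intro m hm
    have hm' : f.natDegree ≤ m := by exact_mod_cast hm
    obtain ⟨m, rfl⟩ : ∃ m', m = m' + 1 := ⟨m - 1, (Nat.succ_pred_eq_of_pos (hd.trans_le hm')).symm⟩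
    rw [coeff_sub, coeff_X_mul, coeff_C_mul]
    rcases eq_or_lt_of_le hm' with heq | hlt
    · have hm1 : m = f.natDegree - 1 := by omega
      rw [hm1, ← hc, show f.natDegree - 1 + 1 = f.natDegree from by omega,
        hf.coeff_natDegree, mul_one, sub_self]
    · have hpm : p.coeff m = 0 := by
        apply coeff_eq_zero_of_degree_lt
        refine hpdeg.trans_le ?_
        rw [hdegf]
        exact_mod_cast (by omega : f.natDegree ≤ m)
      have hfm : f.coeff (m + 1) = 0 := coeff_eq_zero_of_natDegree_lt (by omega)
      rw [hpm, hfm, mul_zero, sub_zero]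
  have hr : modByMonicHom hf (root f * z) = X * p - C c * f := by
    rw [h1, modByMonicHom_mk]
    have h2 : (X * p) %ₘ f = (X * p - C c * f) %ₘ f :=
      modByMonic_eq_of_dvd_sub hf (by simp)
    rw [h2, (modByMonic_eq_self_iff hf).mpr hdeg2]
  rw [hr, coeff_sub, coeff_X_mul, coeff_C_mul, mul_comm c]

lemma auxB {k : Type*} [Field k] {f : k[X]} (hf : f.Monic) (hd : 0 < f.natDegree) :
    ∀ m, m ≤ f.natDegree - 1 → ∀ z : AdjoinRoot f,
      (modByMonicHom hf
          ((minpolyDiv k (root f)).coeff (f.natDegree - 1 - m) * z)).coeff (f.natDegree - 1)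
        = (modByMonicHom hf z).coeff (f.natDegree - 1 - m) := by
  haveI : Nontrivial (AdjoinRoot f) := AdjoinRoot.nontrivial f (by
    rw [degree_eq_natDegree hf.ne_zero]
    exact_mod_cast (by omega : f.natDegree ≠ 0))
  have hmin : minpoly k (root f) = f := by
    rw [AdjoinRoot.minpoly_root hf.ne_zero, hf.leadingCoeff, inv_one, map_one, mul_one]
  have hint : IsIntegral k (root f) := isIntegral_root' hf
  have hndeg : (minpolyDiv k (root f)).natDegree + 1 = f.natDegree := by
    have := natDegree_minpolyDiv_succ (R := k) (x := root f) hint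
    rwa [hmin] at this
  have htop : (minpolyDiv k (root f)).coeff (f.natDegree - 1) = 1 := by
    have h := (minpolyDiv_monic (x := root f) hint).coeff_natDegree
    rwa [show (minpolyDiv k (root f)).natDegree = f.natDegree - 1 from by omega] at h
  intro m
  induction m with
  | zero => intro _ z; rw [Nat.sub_zero, htop, one_mul]
  | succ m IH =>
    intro hm z
    have hm' : m ≤ f.natDegree - 1 := by omega
    set i := f.natDegree - 1 - (m + 1) with hidef
    have hi1 : i + 1 = f.natDegree - 1 - m := by omega
    have hrec := coeff_minpolyDiv k (root f) i
    rw [hmin] at hrec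
    rw [hrec, add_mul, map_add, coeff_add]
    have h1 : (modByMonicHom hf ((algebraMap k (AdjoinRoot f)) (f.coeff (i + 1)) * z)).coeff
        (f.natDegree - 1) = f.coeff (i + 1) * (modByMonicHom hf z).coeff (f.natDegree - 1) := by
      rw [← Algebra.smul_def, map_smul, coeff_smul, smul_eq_mul]
    have h2 : (modByMonicHom hf ((minpolyDiv k (root f)).coeff (i + 1) * root f * z)).coeff
        (f.natDegree - 1) = (modByMonicHom hf (root f * z)).coeff (i + 1) := by
      rw [mul_assoc, hi1]
      exact IH hm' (root f * z)
    rw [h1, h2, auxA hf hd (by omega : i + 1 ≤ f.natDegree - 1) z]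
    ring

lemma auxTrace {k : Type*} [Field k] {f : k[X]} (hf : f.Monic) (hd : 0 < f.natDegree)
    (w : AdjoinRoot f) :
    Algebra.trace k (AdjoinRoot f) w
      = (modByMonicHom hf (aeval (root f) (derivative f) * w)).coeff (f.natDegree - 1) := by
  classical
  haveI : Nontrivial (AdjoinRoot f) := AdjoinRoot.nontrivial f (by
    rw [degree_eq_natDegree hf.ne_zero]
    exact_mod_cast (by omega : f.natDegree ≠ 0))
  have hmin : minpoly k (root f) = f := by
    rw [AdjoinRoot.minpoly_root hf.ne_zero, hf.leadingCoeff, inv_one, map_one, mul_one]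
  have hint : IsIntegral k (root f) := isIntegral_root' hf
  have hndeg : (minpolyDiv k (root f)).natDegree + 1 = f.natDegree := by
    have := natDegree_minpolyDiv_succ (R := k) (x := root f) hint
    rwa [hmin] at this
  set b := (powerBasis' hf).basis with hbdef
  rw [Algebra.trace_eq_matrix_trace b, Matrix.trace]
  have hb : ∀ i : Fin f.natDegree, b i = root f ^ (i : ℕ) := (powerBasis' hf).basis_eq_pow
  have hrepr : ∀ (z : AdjoinRoot f) (i : Fin f.natDegree),
      b.repr z i = (modByMonicHom hf z).coeff i :=
    fun z i => powerBasisAux'_repr_apply_to_fun hf z i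
  have step1 : ∀ i : Fin f.natDegree,
      (modByMonicHom hf (w * root f ^ (i : ℕ))).coeff (i : ℕ)
        = (modByMonicHom hf ((minpolyDiv k (root f)).coeff (i : ℕ)
            * (root f ^ (i : ℕ) * w))).coeff (f.natDegree - 1) := by
    intro i
    have h := auxB hf hd (f.natDegree - 1 - i) (by omega) (root f ^ (i : ℕ) * w)
    rw [show f.natDegree - 1 - (f.natDegree - 1 - (i : ℕ)) = (i : ℕ) from by
      have := i.isLt; omega] at h
    rw [mul_comm w]
    exact h.symm
  have hsum : ∑ i : Fin f.natDegree, Matrix.diag (Algebra.leftMulMatrix b w) i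
      = ∑ i : Fin f.natDegree, (modByMonicHom hf ((minpolyDiv k (root f)).coeff (i : ℕ)
            * (root f ^ (i : ℕ) * w))).coeff (f.natDegree - 1) := by
    refine Finset.sum_congr rfl fun i _ => ?_
    show Algebra.leftMulMatrix b w i i = _
    exact (Algebra.leftMulMatrix_eq_repr_mul b w i i).trans ((hrepr _ i).trans (by rw [hb, step1 i]))
  show (∑ i : Fin f.natDegree, Matrix.diag (Algebra.leftMulMatrix b w) i) = _
  rw [hsum, ← finset_sum_coeff, ← map_sum]
  have heval : ∑ i : Fin f.natDegree, (minpolyDiv k (root f)).coeff (i : ℕ) * root f ^ (i : ℕ)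
      = aeval (root f) (derivative f) := by
    have h1 := eval_eq_sum_range' (p := minpolyDiv k (root f))
      (by omega : (minpolyDiv k (root f)).natDegree < f.natDegree) (root f)
    have h2 := eval_minpolyDiv_self (R := k) (x := root f)
    rw [hmin] at h2
    rw [Fin.sum_univ_eq_sum_range (fun i => (minpolyDiv k (root f)).coeff i * root f ^ i),
      ← h1, h2]
  rw [show (∑ i : Fin f.natDegree, (minpolyDiv k (root f)).coeff (i : ℕ)
        * (root f ^ (i : ℕ) * w)) = aeval (root f) (derivative f) * w from by
    rw [← heval, Finset.sum_mul]
    exact Finset.sum_congr rfl fun i _ => by ring]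


/-- For `L = k[x]/(f)` with `f` monic separable of degree `2n+1`, `β` the image of `x`,
and the bilinear form `(λ,ν) = Tr_{L/k}(λν/f'(β))` (with `u = f'(β)⁻¹`), the subspace
`M = span{1,β,…,β^{n-1}}` is isotropic of dimension `n`, and `β·M ⊆ M^⊥`. -/
theorem stmt1 (n : ℕ) (k : Type*) [Field k] (hchar : (2 : k) ≠ 0)
    (f : Polynomial k) (hf : f.Monic) (hsep : f.Separable)
    (hdeg : f.natDegree = 2 * n + 1)
    (u : AdjoinRoot f)
    (hu : u * Polynomial.aeval (AdjoinRoot.root f) (Polynomial.derivative f) = 1)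
    (M : Submodule k (AdjoinRoot f))
    (hM : M = Submodule.span k (Set.range fun i : Fin n => (AdjoinRoot.root f) ^ (i : ℕ))) :
    Module.finrank k M = n ∧
    (∀ x ∈ M, ∀ y ∈ M, Algebra.trace k (AdjoinRoot f) (x * y * u) = 0) ∧
    (∀ x ∈ M, ∀ y ∈ M,
      Algebra.trace k (AdjoinRoot f) ((AdjoinRoot.root f * x) * y * u) = 0) := by
  have hd : 0 < f.natDegree := by omega
  -- the key trace identity
  have hTr : ∀ z : AdjoinRoot f, Algebra.trace k (AdjoinRoot f) (z * u)
      = (modByMonicHom hf z).coeff (2 * n) := by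
    intro z
    rw [auxTrace hf hd (z * u),
      show aeval (root f) (derivative f) * (z * u) = z from by
        rw [mul_comm _ (z * u), mul_assoc, hu, mul_one],
      hdeg, Nat.add_sub_cancel]
  -- degrees of elements of M
  have hMdeg : ∀ x ∈ M, (modByMonicHom hf x).degree < (n : WithBot ℕ) := by
    intro x hx
    rw [hM] at hx
    induction hx using Submodule.span_induction with
    | mem x h =>
      obtain ⟨i, rfl⟩ := h
      dsimp only
      rw [show (root f : AdjoinRoot f) ^ (i : ℕ) = mk f (X ^ (i : ℕ)) from by
        rw [map_pow, mk_X], modByMonicHom_mk, (modByMonic_eq_self_iff hf).mpr ?_]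
      · rw [degree_X_pow]
        exact_mod_cast i.isLt
      · rw [degree_X_pow, degree_eq_natDegree hf.ne_zero]
        exact_mod_cast (by have := i.isLt; omega : (i : ℕ) < f.natDegree)
    | zero => rw [map_zero, degree_zero]; exact WithBot.bot_lt_coe n
    | add x y _ _ hx hy =>
      rw [map_add]
      exact lt_of_le_of_lt (degree_add_le _ _) (max_lt hx hy)
    | smul a x _ hx =>
      rw [map_smul]
      exact lt_of_le_of_lt (degree_smul_le _ _) hx
  -- vanishing of the relevant coefficients
  have hprod : ∀ x ∈ M, ∀ y ∈ M,
      (modByMonicHom hf (x * y)).coeff (2 * n) = 0 ∧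
      (modByMonicHom hf (root f * x * y)).coeff (2 * n) = 0 := by
    intro x hx y hy
    have hpx := hMdeg x hx
    have hpy := hMdeg y hy
    set p := modByMonicHom hf x with hp
    set q := modByMonicHom hf y with hq
    have hxeq : x = mk f p := (mk_leftInverse hf x).symm
    have hyeq : y = mk f q := (mk_leftInverse hf y).symm
    by_cases hp0 : p = 0
    · rw [hxeq, hp0, map_zero]
      constructor <;> simp
    by_cases hq0 : q = 0
    · rw [hyeq, hq0, map_zero]
      constructor <;> simp
    have hnp : p.natDegree < n := (natDegree_lt_iff_degree_lt hp0).mpr hpx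
    have hnq : q.natDegree < n := (natDegree_lt_iff_degree_lt hq0).mpr hpy
    have hpq : (p * q).natDegree ≤ p.natDegree + q.natDegree := natDegree_mul_le
    have hXpq : (X * (p * q)).natDegree ≤ 1 + (p.natDegree + q.natDegree) :=
      natDegree_mul_le.trans (add_le_add natDegree_X_le hpq)
    constructor
    · rw [hxeq, hyeq, ← map_mul, modByMonicHom_mk,
        (modByMonic_eq_self_iff hf).mpr ?_]
      · exact coeff_eq_zero_of_natDegree_lt (by omega)
      · refine degree_le_natDegree.trans_lt ?_
        rw [degree_eq_natDegree hf.ne_zero]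
        exact_mod_cast (by omega : (p * q).natDegree < f.natDegree)
    · rw [hxeq, hyeq, show root f * mk f p * mk f q = mk f (X * (p * q)) from by
        rw [← mk_X, ← map_mul, ← map_mul, mul_assoc], modByMonicHom_mk,
        (modByMonic_eq_self_iff hf).mpr ?_]
      · exact coeff_eq_zero_of_natDegree_lt (by omega)
      · refine degree_le_natDegree.trans_lt ?_
        rw [degree_eq_natDegree hf.ne_zero]
        exact_mod_cast (by omega : (X * (p * q)).natDegree < f.natDegree)
  refine ⟨?_, fun x hx y hy => ?_, fun x hx y hy => ?_⟩
  · have hle : n ≤ f.natDegree := by omega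
    have li : LinearIndependent k fun i : Fin n => (root f) ^ (i : ℕ) := by
      have lb := (powerBasis' hf).basis.linearIndependent
      have h2 := lb.comp (Fin.castLE (show n ≤ (powerBasis' hf).dim by simpa using hle)) (Fin.castLE_injective _)
      convert h2 using 1
      funext i
      rw [Function.comp_apply, (powerBasis' hf).basis_eq_pow]
      rfl
      rfl
    rw [hM, finrank_span_eq_card li, Fintype.card_fin]
  · rw [hTr (x * y)]
    exact (hprod x hx y hy).1
  · rw [hTr (root f * x * y)]
    exact (hprod x hx y hy).2
end

section
/- Let $p$ be a prime with $p > 2n+1$. The number of monic separable polynomials $f(x) = x^{2n+1} + c_2 x^{2n-1} + \cdots + c_{2n+1}$ over $\mathbb{F}_p$ (i.e., with $x^{2n}$-coefficient zero and nonzero discriminant) that are reducible over $\mathbb{F}_p$ is $p^{2n} \cdot \frac{2n}{2n+1} + O(p^{2n-1})$, where the implied constant depends only on $n$. -/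
set_option linter.unusedSectionVars false
set_option linter.unusedVariables false
set_option maxHeartbeats 1000000
open Polynomial


variable {K : Type*} [Field K] [Fintype K]

noncomputable def toPoly (m : ℕ) (a : Fin m → K) : K[X] :=
  X ^ m + ∑ i : Fin m, C (a i) * X ^ (i : ℕ)

lemma degree_sum_lt (m : ℕ) (a : Fin m → K) :
    (∑ i : Fin m, C (a i) * X ^ (i : ℕ)).degree < (m : WithBot ℕ) := by
  apply lt_of_le_of_lt (degree_sum_le _ _)
  rw [Finset.sup_lt_iff (by exact_mod_cast WithBot.bot_lt_coe m)]
  intro i _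
  exact lt_of_le_of_lt (degree_C_mul_X_pow_le _ _) (by exact_mod_cast i.2)

lemma toPoly_monic (m : ℕ) (a : Fin m → K) : (toPoly m a).Monic := by
  have := degree_sum_lt m a
  rw [← degree_X_pow (R := K)] at this
  exact (monic_X_pow m).add_of_left this

lemma toPoly_natDegree (m : ℕ) (a : Fin m → K) : (toPoly m a).natDegree = m := by
  have : (toPoly m a).degree = m := by
    rw [toPoly, degree_add_eq_left_of_degree_lt (by rw [degree_X_pow]; exact degree_sum_lt m a),
      degree_X_pow]
  exact natDegree_eq_of_degree_eq_some this

lemma sum_coeff_ge (m : ℕ) (a : Fin m → K) {k : ℕ} (hk : m ≤ k) :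
    (∑ i : Fin m, C (a i) * X ^ (i : ℕ)).coeff k = 0 := by
  rw [finset_sum_coeff]
  apply Finset.sum_eq_zero
  intro i _
  rw [coeff_C_mul, coeff_X_pow, if_neg (by omega : ¬ k = (i:ℕ)), mul_zero]

lemma toPoly_coeff_lt (m : ℕ) (a : Fin m → K) (i : Fin m) :
    (toPoly m a).coeff i = a i := by
  rw [toPoly, coeff_add, coeff_X_pow, if_neg (Nat.ne_of_lt i.2), finset_sum_coeff]
  simp only [coeff_C_mul, coeff_X_pow]
  rw [Finset.sum_eq_single i]
  · simp
  · intro j _ hj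
    rw [if_neg (by simpa [Fin.val_eq_val, eq_comm] using hj), mul_zero]
  · simp

lemma eq_toPoly {m : ℕ} {f : K[X]} (hm : f.Monic) (hd : f.natDegree = m) :
    f = toPoly m (fun i => f.coeff i) := by
  ext k
  rcases lt_trichotomy k m with h | h | h
  · rw [toPoly_coeff_lt m _ ⟨k, h⟩]
  · subst h
    rw [← hd, hm.coeff_natDegree, toPoly, coeff_add, coeff_X_pow, if_pos rfl, hd,
      sum_coeff_ge _ _ le_rfl, add_zero]
  · rw [coeff_eq_zero_of_natDegree_lt (by omega), toPoly, coeff_add, coeff_X_pow,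
      if_neg (by omega), sum_coeff_ge _ _ (le_of_lt h), add_zero]

noncomputable def monicEquiv (m : ℕ) :
    {f : K[X] | f.Monic ∧ f.natDegree = m} ≃ (Fin m → K) where
  toFun f i := f.1.coeff i
  invFun a := ⟨toPoly m a, toPoly_monic m a, toPoly_natDegree m a⟩
  left_inv f := by
    ext1
    exact (eq_toPoly f.2.1 f.2.2).symm
  right_inv a := by
    ext i
    exact toPoly_coeff_lt m a i

lemma ncard_monic (m : ℕ) :
    ({f : K[X] | f.Monic ∧ f.natDegree = m}).ncard = Fintype.card K ^ m := by
  rw [← Nat.card_coe_set_eq, Nat.card_congr (monicEquiv m)]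
  simp [Nat.card_eq_fintype_card]

lemma finite_monic (m : ℕ) : ({f : K[X] | f.Monic ∧ f.natDegree = m}).Finite := by
  rw [← Set.finite_coe_iff]
  exact Finite.of_equiv _ (monicEquiv m).symm

-- subleading coefficient of taylor shift
lemma taylor_coeff_sub_one {d : ℕ} (hd : 1 ≤ d) (f : K[X]) (hm : f.Monic)
    (hdeg : f.natDegree = d) (a : K) :
    (taylor a f).coeff (d - 1) = f.coeff (d - 1) + d * a := by
  rw [taylor_coeff]
  set g := hasseDeriv (d - 1) f with hg
  have hg0 : g.coeff 0 = f.coeff (d - 1) := by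
    rw [hg, hasseDeriv_coeff, zero_add, Nat.choose_self]
    simp
  have hg1 : g.coeff 1 = d := by
    rw [hg, hasseDeriv_coeff]
    have h1 : 1 + (d - 1) = d := by omega
    have h2 : d.choose (d - 1) = d := by
      have h := Nat.choose_symm (Nat.sub_le d 1)
      rw [Nat.sub_sub_self hd] at h
      rw [← h, Nat.choose_one_right]
    have h3 : f.coeff d = 1 := by rw [← hdeg, hm.coeff_natDegree]
    rw [h1, h2, h3, mul_one]
  have hdegg : g.natDegree ≤ 1 := by
    rw [natDegree_le_iff_coeff_eq_zero]
    intro k hk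
    rw [hg, hasseDeriv_coeff]
    rw [coeff_eq_zero_of_natDegree_lt (by omega)]
    simp
  rw [eval_eq_sum_range' (Nat.lt_succ_of_le hdegg)]
  rw [Finset.sum_range_succ, Finset.sum_range_one]
  rw [hg0, hg1]
  ring

lemma taylor_mem_monic {d : ℕ} {f : K[X]} (hm : f.Monic) (hdeg : f.natDegree = d) (a : K) :
    (taylor a f).Monic ∧ (taylor a f).natDegree = d := by
  rw [taylor_apply]
  exact ⟨hm.comp_X_add_C a, by rw [← taylor_apply, natDegree_taylor, hdeg]⟩

noncomputable def translateEquiv {d : ℕ} (hd1 : 1 ≤ d) (hdK : (d : K) ≠ 0)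
    (S : Set K[X]) (hmon : ∀ f ∈ S, f.Monic ∧ f.natDegree = d)
    (hS : ∀ (a : K), ∀ f ∈ S, taylor a f ∈ S) :
    S ≃ K × {f ∈ S | f.coeff (d - 1) = 0} where
  toFun f := ⟨f.1.coeff (d - 1),
    ⟨taylor (-(f.1.coeff (d - 1)) * (d : K)⁻¹) f.1, by
      refine ⟨hS _ _ f.2, ?_⟩
      rw [taylor_coeff_sub_one hd1 f.1 (hmon f.1 f.2).1 (hmon f.1 f.2).2]
      field_simp
      ring⟩⟩
  invFun tg := ⟨taylor (tg.1 * (d : K)⁻¹) tg.2.1, hS _ _ tg.2.2.1⟩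
  left_inv f := by
    ext1
    simp only [taylor_taylor]
    have : f.1.coeff (d - 1) * (d : K)⁻¹ + -(f.1.coeff (d - 1)) * (d : K)⁻¹ = 0 := by ring
    rw [this, taylor_zero]
  right_inv tg := by
    obtain ⟨t, g, hg⟩ := tg
    have hgm := hmon g hg.1
    have hc : (taylor (t * (d : K)⁻¹) g).coeff (d - 1) = t := by
      rw [taylor_coeff_sub_one hd1 g hgm.1 hgm.2, hg.2, zero_add]
      field_simp
    refine Prod.ext ?_ ?_
    · exact hc
    · ext1
      simp only [hc, taylor_taylor]
      have : -t * (d : K)⁻¹ + t * (d : K)⁻¹ = 0 := by ring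
      rw [this, taylor_zero]

lemma translate_count {d : ℕ} (hd1 : 1 ≤ d) (hdK : (d : K) ≠ 0)
    (S : Set K[X]) (hmon : ∀ f ∈ S, f.Monic ∧ f.natDegree = d)
    (hS : ∀ (a : K), ∀ f ∈ S, taylor a f ∈ S) :
    S.ncard = Fintype.card K * ({f ∈ S | f.coeff (d - 1) = 0}).ncard := by
  rw [← Nat.card_coe_set_eq, Nat.card_congr (translateEquiv hd1 hdK S hmon hS),
    Nat.card_prod, Nat.card_eq_fintype_card, Nat.card_coe_set_eq]

lemma taylor_eq_algEquiv (a : K) (f : K[X]) : (algEquivAevalXAddC a) f = taylor a f := by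
  rw [algEquivAevalXAddC_apply, taylor_apply, comp_eq_aeval]

lemma taylor_irreducible {a : K} {f : K[X]} (h : Irreducible f) : Irreducible (taylor a f) := by
  rw [← taylor_eq_algEquiv]
  exact (MulEquiv.irreducible_iff (algEquivAevalXAddC a).toMulEquiv).mpr h

lemma taylor_squarefree {a : K} {f : K[X]} (h : Squarefree f) : Squarefree (taylor a f) := by
  rw [← taylor_eq_algEquiv]
  intro x hx
  have hd : ((algEquivAevalXAddC a).symm x) * ((algEquivAevalXAddC a).symm x) ∣ f := by
    have : (x * x : K[X]) ∣ (algEquivAevalXAddC a) f := hx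
    have h2 := map_dvd (algEquivAevalXAddC a).symm this
    rwa [map_mul, AlgEquiv.symm_apply_apply] at h2
  have hu := h _ hd
  have h3 := IsUnit.map (algEquivAevalXAddC a) hu
  rwa [AlgEquiv.apply_symm_apply] at h3

lemma ncard_biUnion_le' {α ι : Type*} (s : Finset ι) (t : ι → Set α)
    (ht : ∀ i, (t i).Finite) : (⋃ i ∈ s, t i).ncard ≤ ∑ i ∈ s, (t i).ncard := by
  classical
  induction s using Finset.induction with
  | empty => simp
  | insert a s hx ih =>
    rw [Finset.set_biUnion_insert, Finset.sum_insert hx]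
    exact le_trans (Set.ncard_union_le _ _) (Nat.add_le_add_left ih _)

lemma ncard_prod_eq {α β : Type*} (s : Set α) (t : Set β) :
    (s ×ˢ t).ncard = s.ncard * t.ncard := by
  rw [← Nat.card_coe_set_eq, Nat.card_congr (Equiv.Set.prod s t), Nat.card_prod,
    Nat.card_coe_set_eq, Nat.card_coe_set_eq]

lemma nonsquarefree_decomp {d n' : ℕ} (hd : d = 2 * n' + 1) {f : K[X]}
    (hm : f.Monic) (hdeg : f.natDegree = d) (hsq : ¬ Squarefree f) :
    ∃ k ∈ Finset.Icc 1 n', ∃ g h : K[X], g.Monic ∧ g.natDegree = k ∧ h.Monic ∧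
      h.natDegree = d - 2 * k ∧ f = g ^ 2 * h := by
  rw [Squarefree] at hsq
  push_neg at hsq
  obtain ⟨x, hxx, hxu⟩ := hsq
  have hf0 : f ≠ 0 := hm.ne_zero
  have hx0 : x ≠ 0 := by rintro rfl; simp at hxx; exact hf0 hxx
  set g := x * C (x.leadingCoeff)⁻¹ with hgdef
  have hgm : g.Monic := monic_mul_leadingCoeff_inv hx0
  have hlc : x.leadingCoeff ≠ 0 := leadingCoeff_ne_zero.mpr hx0
  obtain ⟨c, hc⟩ := hxx
  have hfact : f = g ^ 2 * (C (x.leadingCoeff) ^ 2 * c) := by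
    have key : g ^ 2 * (C (x.leadingCoeff) ^ 2 * c)
        = (C x.leadingCoeff⁻¹ * C x.leadingCoeff) ^ 2 * (x * x * c) := by
      rw [hgdef]; ring
    rw [key, ← C_mul, inv_mul_cancel₀ hlc, C_1, one_pow, one_mul, hc]
  set h := C (x.leadingCoeff) ^ 2 * c with hhdef
  have hhm : h.Monic := by
    have h1 : (g ^ 2 * h).Monic := hfact ▸ hm
    have h2 : (g ^ 2).Monic := hgm.pow 2
    exact h2.of_mul_monic_left h1
  have hg0 : g ≠ 0 := hgm.ne_zero
  have hh0 : h ≠ 0 := hhm.ne_zero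
  have hdegs : d = 2 * g.natDegree + h.natDegree := by
    rw [← hdeg, hfact, natDegree_mul (pow_ne_zero 2 hg0) hh0, natDegree_pow]
  have hk1 : 1 ≤ g.natDegree := by
    by_contra hcon
    have : g.natDegree = 0 := by omega
    have hg1 : g = 1 := hgm.natDegree_eq_zero.mp this
    exact hxu (isUnit_of_dvd_one ⟨C (x.leadingCoeff)⁻¹, by rw [← hgdef, hg1]⟩)
  refine ⟨g.natDegree, Finset.mem_Icc.mpr ⟨hk1, by omega⟩, g, h, hgm, rfl, hhm, by omega, hfact⟩

lemma ncard_nonsquarefree_le {d n' : ℕ} (hd : d = 2 * n' + 1) :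
    ({f : K[X] | f.Monic ∧ f.natDegree = d ∧ ¬ Squarefree f}).ncard
      ≤ n' * Fintype.card K ^ (d - 1) := by
  classical
  set q := Fintype.card K with hq
  have hq1 : 1 ≤ q := Fintype.card_pos
  have hsub : {f : K[X] | f.Monic ∧ f.natDegree = d ∧ ¬ Squarefree f} ⊆
      ⋃ k ∈ Finset.Icc 1 n', (fun gh : K[X] × K[X] => gh.1 ^ 2 * gh.2) ''
        (({g : K[X] | g.Monic ∧ g.natDegree = k}) ×ˢ
         ({h : K[X] | h.Monic ∧ h.natDegree = d - 2 * k})) := by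
    rintro f ⟨hm, hdeg, hsq⟩
    obtain ⟨k, hk, g, h, hgm, hgd, hhm, hhd, hf⟩ := nonsquarefree_decomp hd hm hdeg hsq
    simp only [Set.mem_iUnion]
    exact ⟨k, hk, ⟨(g, h), ⟨⟨hgm, hgd⟩, ⟨hhm, hhd⟩⟩, hf.symm⟩⟩
  refine le_trans (Set.ncard_le_ncard hsub ?_) ?_
  · exact Set.Finite.biUnion (Finset.finite_toSet _) (fun k _ =>
      Set.Finite.image _ (Set.Finite.prod (finite_monic k) (finite_monic (d - 2 * k))))
  · refine le_trans (ncard_biUnion_le' _ _ (fun k =>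
      Set.Finite.image _ (Set.Finite.prod (finite_monic k) (finite_monic (d - 2 * k))))) ?_
    have hbound : ∀ k ∈ Finset.Icc 1 n',
        ((fun gh : K[X] × K[X] => gh.1 ^ 2 * gh.2) ''
        (({g : K[X] | g.Monic ∧ g.natDegree = k}) ×ˢ
         ({h : K[X] | h.Monic ∧ h.natDegree = d - 2 * k}))).ncard ≤ q ^ (d - 1) := by
      intro k hk
      rw [Finset.mem_Icc] at hk
      refine le_trans (Set.ncard_image_le
        (Set.Finite.prod (finite_monic k) (finite_monic (d - 2 * k)))) ?_
      rw [ncard_prod_eq, ncard_monic, ncard_monic, ← pow_add]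
      exact Nat.pow_le_pow_right hq1 (by omega)
    refine le_trans (Finset.sum_le_sum hbound) ?_
    rw [Finset.sum_const, Nat.card_Icc]
    simp [smul_eq_mul]

section IrrCount

variable (p : ℕ) [Fact p.Prime]

-- root existence
lemma exists_root_in_GF {d : ℕ} (hd : d ≠ 0) {f : (ZMod p)[X]} (hm : f.Monic)
    (hdeg : f.natDegree = d) (hirr : Irreducible f) :
    ∃ x : GaloisField p d, (Polynomial.aeval x) f = 0 := by
  haveI := Fact.mk hirr
  let L := AdjoinRoot f
  have hf0 : f ≠ 0 := hm.ne_zero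
  let pb : PowerBasis (ZMod p) L := AdjoinRoot.powerBasis hf0
  haveI : FiniteDimensional (ZMod p) L := Module.Finite.of_basis pb.basis
  haveI : Finite L := Module.finite_of_finite (ZMod p)
  haveI : Fintype L := Fintype.ofFinite L
  have hcard : Nat.card L = p ^ d := by
    rw [Nat.card_eq_fintype_card, Module.card_eq_pow_finrank (K := ZMod p), ZMod.card,
      pb.finrank, AdjoinRoot.powerBasis_dim, hdeg]
  let e := GaloisField.algEquivGaloisField p d hcard
  refine ⟨e (AdjoinRoot.root f), ?_⟩
  have h0 : (Polynomial.aeval (AdjoinRoot.root f)) f = 0 := by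
    have h := AdjoinRoot.minpoly_root (K := ZMod p) hf0
    rw [hm.leadingCoeff, inv_one, map_one, mul_one] at h
    have h2 := minpoly.aeval (ZMod p) (AdjoinRoot.root f)
    rwa [h] at h2
  have h1 := Polynomial.aeval_algHom_apply e.toAlgHom (AdjoinRoot.root f) f
  show (Polynomial.aeval (e.toAlgHom (AdjoinRoot.root f))) f = 0
  rw [h1, h0, map_zero]

lemma irr_count {d n' : ℕ} (hd : d = 2 * n' + 1) :
    d * ({f : (ZMod p)[X] | f.Monic ∧ f.natDegree = d ∧ Irreducible f}).ncard ≤ p ^ d ∧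
    p ^ d ≤ d * ({f : (ZMod p)[X] | f.Monic ∧ f.natDegree = d ∧ Irreducible f}).ncard
      + n' * p ^ n' := by
  classical
  have hd0 : d ≠ 0 := by omega
  set F := GaloisField p d with hF
  haveI : Fintype F := Fintype.ofFinite F
  have hcardF : Fintype.card F = p ^ d := by
    rw [← Nat.card_eq_fintype_card, GaloisField.card p d hd0]
  have hrank : Module.finrank (ZMod p) F = d := GaloisField.finrank p hd0
  have hint : ∀ x : F, IsIntegral (ZMod p) x := fun x => IsIntegral.of_finite (ZMod p) x
  set μ := fun x : F => minpoly (ZMod p) x with hμ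
  set D : Finset F := Finset.univ.filter (fun x => (μ x).natDegree = d) with hD
  -- each fiber has card d
  have hfiber : ∀ f ∈ D.image μ, (D.filter (fun x => μ x = f)).card = d := by
    intro f hf
    obtain ⟨x₀, hx₀D, hx₀⟩ := Finset.mem_image.mp hf
    have hirr : Irreducible f := hx₀ ▸ minpoly.irreducible (hint x₀)
    have hmon : f.Monic := hx₀ ▸ minpoly.monic (hint x₀)
    have hdeg : f.natDegree = d := by
      rw [← hx₀]; exact (Finset.mem_filter.mp hx₀D).2
    have hsep : f.Separable := PerfectField.separable_of_irreducible hirr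
    have hsplit : (f.map (algebraMap (ZMod p) F)).Splits := by
      rw [← hx₀]; exact Normal.splits inferInstance x₀
    have hf0 : f ≠ 0 := hmon.ne_zero
    set rts := (f.map (algebraMap (ZMod p) F)).roots with hrts
    have hcard : Multiset.card rts = d := by
      rw [hrts, splits_iff_card_roots.mp hsplit, natDegree_map, hdeg]
    have hnodup : rts.Nodup := nodup_roots hsep.map
    have hset : D.filter (fun x => μ x = f) = rts.toFinset := by
      ext x
      simp only [Finset.mem_filter, Multiset.mem_toFinset, hrts]
      rw [Polynomial.mem_roots_map hf0]
      constructor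
      · rintro ⟨-, hxf⟩
        rw [← hxf]
        exact minpoly.aeval _ _
      · intro hx
        have : μ x = f := (minpoly.eq_of_irreducible_of_monic hirr hx hmon).symm
        exact ⟨Finset.mem_filter.mpr ⟨Finset.mem_univ x, by rw [this, hdeg]⟩, this⟩
    rw [hset, Multiset.toFinset_card_of_nodup hnodup, hcard]
  have hDcard : D.card = d * (D.image μ).card := by
    rw [Finset.card_eq_sum_card_fiberwise (fun x hx => Finset.mem_image_of_mem μ hx),
      Finset.sum_congr rfl hfiber, Finset.sum_const, smul_eq_mul, mul_comm]
  -- the image is exactly the set of monic irreducible degree-d polys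
  have hsetEq : {f : (ZMod p)[X] | f.Monic ∧ f.natDegree = d ∧ Irreducible f}
      = ↑(D.image μ) := by
    ext f
    simp only [Set.mem_setOf_eq, Finset.coe_image, Set.mem_image, Finset.mem_coe]
    constructor
    · rintro ⟨hmon, hdeg, hirr⟩
      obtain ⟨x, hx⟩ := exists_root_in_GF p hd0 hmon hdeg hirr
      have hμx : μ x = f := (minpoly.eq_of_irreducible_of_monic hirr hx hmon).symm
      exact ⟨x, Finset.mem_filter.mpr ⟨Finset.mem_univ x, by rw [hμx, hdeg]⟩, hμx⟩
    · rintro ⟨x, hxD, rfl⟩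
      exact ⟨minpoly.monic (hint x), (Finset.mem_filter.mp hxD).2,
        minpoly.irreducible (hint x)⟩
  have hncard : ({f : (ZMod p)[X] | f.Monic ∧ f.natDegree = d ∧ Irreducible f}).ncard
      = (D.image μ).card := by rw [hsetEq, Set.ncard_coe_finset]
  rw [hncard, ← hDcard]
  constructor
  · calc D.card ≤ Finset.univ.card := Finset.card_le_univ D
      _ = p ^ d := hcardF
  · -- complement bound
    have hcompl : Finset.univ.filter (fun x : F => ¬ (μ x).natDegree = d) ⊆
        (Finset.Icc 1 n').biUnion (fun e =>
          Finset.univ.filter (fun x : F => x ^ p ^ e = x)) := by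
      intro x hx
      simp only [Finset.mem_filter, Finset.mem_univ, true_and] at hx
      set e := (μ x).natDegree with he
      have he1 : 1 ≤ e := minpoly.natDegree_pos (hint x)
      have hdvd : e ∣ Module.finrank (ZMod p) F := minpoly.degree_dvd (hint x)
      rw [hrank] at hdvd
      have hen : e ≤ n' := by
        rcases Nat.lt_or_ge e d with h | h
        · obtain ⟨c, hc⟩ := hdvd
          have hc2 : 2 ≤ c := by
            rcases Nat.lt_or_ge c 2 with h2 | h2
            · interval_cases c <;> omega
            · exact h2
          have h3 : e * 2 ≤ e * c := Nat.mul_le_mul_left e hc2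
          omega
        · exact absurd (le_antisymm (Nat.le_of_dvd (by omega) hdvd) h) hx
      -- now x ^ p ^ e = x
      have hxe : x ^ p ^ e = x := by
        set E := IntermediateField.adjoin (ZMod p) {x} with hE
        haveI : FiniteDimensional (ZMod p) E := IntermediateField.adjoin.finiteDimensional (hint x)
        haveI : Fintype E := Fintype.ofFinite E
        have hrankE : Module.finrank (ZMod p) E = e := IntermediateField.adjoin.finrank (hint x)
        have hcardE : Fintype.card E = p ^ e := by
          rw [Module.card_eq_pow_finrank (K := ZMod p), ZMod.card, hrankE]
        have hgen := FiniteField.pow_card (IntermediateField.AdjoinSimple.gen (ZMod p) x)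
        rw [hcardE] at hgen
        have := congrArg (algebraMap E F) hgen
        rw [map_pow] at this
        rwa [IntermediateField.AdjoinSimple.algebraMap_gen] at this
      exact Finset.mem_biUnion.mpr ⟨e, Finset.mem_Icc.mpr ⟨he1, hen⟩,
        Finset.mem_filter.mpr ⟨Finset.mem_univ x, hxe⟩⟩
    have hroots : ∀ e : ℕ, 1 ≤ e →
        (Finset.univ.filter (fun x : F => x ^ p ^ e = x)).card ≤ p ^ e := by
      intro e he
      have hpe : 2 ≤ p ^ e := by
        calc 2 = 2 ^ 1 := rfl
        _ ≤ p ^ e := Nat.pow_le_pow_left (Fact.out : p.Prime).two_le 1 |>.trans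
            (Nat.pow_le_pow_right (by have := (Fact.out : p.Prime).two_le; omega) he)
      set Q : F[X] := X ^ p ^ e - X with hQ
      have hQdeg : Q.natDegree = p ^ e := by
        rw [hQ, natDegree_sub_eq_left_of_natDegree_lt]
        · exact natDegree_X_pow _
        · rw [natDegree_X_pow, natDegree_X]; omega
      have hQ0 : Q ≠ 0 := by
        intro h
        rw [h] at hQdeg
        simp at hQdeg
        omega
      have hsub : Finset.univ.filter (fun x : F => x ^ p ^ e = x) ⊆ Q.roots.toFinset := by
        intro x hx
        simp only [Finset.mem_filter, Finset.mem_univ, true_and] at hx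
        rw [Multiset.mem_toFinset, mem_roots hQ0]
        simp [hQ, IsRoot, hx]
      calc (Finset.univ.filter (fun x : F => x ^ p ^ e = x)).card
          ≤ Q.roots.toFinset.card := Finset.card_le_card hsub
        _ ≤ Multiset.card Q.roots := Multiset.toFinset_card_le _
        _ ≤ Q.natDegree := Polynomial.card_roots' Q
        _ = p ^ e := hQdeg
    have hcomplCard : (Finset.univ.filter (fun x : F => ¬ (μ x).natDegree = d)).card
        ≤ n' * p ^ n' := by
      calc (Finset.univ.filter (fun x : F => ¬ (μ x).natDegree = d)).card
          ≤ ((Finset.Icc 1 n').biUnion (fun e =>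
            Finset.univ.filter (fun x : F => x ^ p ^ e = x))).card :=
          Finset.card_le_card hcompl
        _ ≤ ∑ e ∈ Finset.Icc 1 n', (Finset.univ.filter (fun x : F => x ^ p ^ e = x)).card :=
          Finset.card_biUnion_le
        _ ≤ ∑ e ∈ Finset.Icc 1 n', p ^ n' := by
            refine Finset.sum_le_sum (fun e he => ?_)
            rw [Finset.mem_Icc] at he
            exact le_trans (hroots e he.1) (Nat.pow_le_pow_right
              (by have := (Fact.out : p.Prime).two_le; omega) he.2)
        _ = n' * p ^ n' := by rw [Finset.sum_const, Nat.card_Icc]; simp [smul_eq_mul]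
    have hsplit := Finset.card_filter_add_card_filter_not
      (s := (Finset.univ : Finset F)) (p := fun x => (μ x).natDegree = d)
    rw [Finset.card_univ, hcardF] at hsplit
    have hDg : D.card = (Finset.univ.filter (fun x : F => (μ x).natDegree = d)).card := rfl
    omega

end IrrCount


/-- For primes `p > 2n+1`, the number of monic separable polynomials
`x^{2n+1} + c₂x^{2n-1} + ⋯ + c_{2n+1}` over `F_p` that are reducible is
`p^{2n}·(2n/(2n+1)) + O(p^{2n-1})`, with implied constant depending only on `n`. -/
theorem stmt4 (n : ℕ) :
    ∃ C : ℝ, ∀ p : ℕ, p.Prime → p > 2 * n + 1 →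
      |(Nat.card {f : Polynomial (ZMod p) // f.Monic ∧ f.natDegree = 2 * n + 1 ∧
          f.coeff (2 * n) = 0 ∧ f.Separable ∧ ¬ Irreducible f} : ℝ) -
        (p : ℝ) ^ (2 * n) * ((2 * n : ℝ) / (2 * n + 1))| ≤ C * (p : ℝ) ^ (2 * n - 1) := by
  refine ⟨n + 1, fun p hp hplarge => ?_⟩
  haveI : Fact p.Prime := ⟨hp⟩
  haveI : NeZero p := ⟨hp.ne_zero⟩
  rcases Nat.eq_zero_or_pos n with rfl | hn
  · -- n = 0 : the set is empty
    have hempty : IsEmpty {f : Polynomial (ZMod p) // f.Monic ∧ f.natDegree = 2 * 0 + 1 ∧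
        f.coeff (2 * 0) = 0 ∧ f.Separable ∧ ¬ Irreducible f} := by
      refine ⟨fun ⟨f, hm, hdeg, hc, _, hni⟩ => ?_⟩
      have hfX : f = X := by
        have h1 : f = X + C (f.coeff 0) := hm.eq_X_add_C (by simpa using hdeg)
        rw [show ((2:ℕ) * 0 = 0) from rfl] at hc
        rw [h1, hc, map_zero, add_zero]
      exact hni (hfX ▸ irreducible_X)
    rw [Nat.card_of_isEmpty]
    simp only [Nat.cast_zero]
    norm_num
  -- main case n ≥ 1
  set d := 2 * n + 1 with hd
  set K := ZMod p with hK
  have hcardK : Fintype.card K = p := ZMod.card p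
  have hdK : (d : K) ≠ 0 := by
    rw [Ne, ZMod.natCast_eq_zero_iff]
    intro hdvd
    have := Nat.le_of_dvd (by omega) hdvd
    omega
  have hd1 : 1 ≤ d := by omega
  -- the three sets
  set M : Set K[X] := {f | f.Monic ∧ f.natDegree = d} with hM
  set NS : Set K[X] := {f | f.Monic ∧ f.natDegree = d ∧ ¬ Squarefree f} with hNS
  set IR : Set K[X] := {f | f.Monic ∧ f.natDegree = d ∧ Irreducible f} with hIR
  set T : Set K[X] := {f | f.Monic ∧ f.natDegree = d ∧ f.coeff (2 * n) = 0 ∧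
      f.Separable ∧ ¬ Irreducible f} with hT
  have hd2n : d - 1 = 2 * n := by omega
  -- counts
  have hM0 : ({f ∈ M | f.coeff (d - 1) = 0}).ncard = p ^ (2 * n) := by
    have h1 := translate_count hd1 hdK M (fun f hf => hf)
      (fun a f hf => taylor_mem_monic hf.1 hf.2 a)
    rw [ncard_monic d, hcardK, hd, pow_succ'] at h1
    exact (Nat.eq_of_mul_eq_mul_left hp.pos h1.symm)
  have hNSmem : ∀ f ∈ NS, f.Monic ∧ f.natDegree = d := fun f hf => ⟨hf.1, hf.2.1⟩
  have hNSclosed : ∀ (a : K), ∀ f ∈ NS, taylor a f ∈ NS := by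
    rintro a f ⟨hm, hdeg, hsq⟩
    obtain ⟨hm', hdeg'⟩ := taylor_mem_monic hm hdeg a
    refine ⟨hm', hdeg', fun hsq' => hsq ?_⟩
    have := taylor_squarefree (a := -a) hsq'
    rwa [taylor_taylor, neg_add_cancel, taylor_zero] at this
  have hNS0 : p * ({f ∈ NS | f.coeff (d - 1) = 0}).ncard ≤ n * p ^ (2 * n) := by
    have h1 := translate_count hd1 hdK NS hNSmem hNSclosed
    rw [hcardK] at h1
    have h2 := ncard_nonsquarefree_le (K := K) hd
    rw [hcardK, hd2n] at h2
    have hNSeq : NS.ncard = ({f : K[X] | f.Monic ∧ f.natDegree = d ∧ ¬ Squarefree f}).ncard := rfl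
    omega
  have hIRmem : ∀ f ∈ IR, f.Monic ∧ f.natDegree = d := fun f hf => ⟨hf.1, hf.2.1⟩
  have hIRclosed : ∀ (a : K), ∀ f ∈ IR, taylor a f ∈ IR := by
    rintro a f ⟨hm, hdeg, hirr⟩
    obtain ⟨hm', hdeg'⟩ := taylor_mem_monic hm hdeg a
    exact ⟨hm', hdeg', taylor_irreducible hirr⟩
  have hIR0 := translate_count hd1 hdK IR hIRmem hIRclosed
  rw [hcardK] at hIR0
  obtain ⟨hIRle, hIRge⟩ := irr_count p (d := d) (n' := n) hd
  rw [hIR0] at hIRle hIRge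
  -- partition
  have hfinM : M.Finite := finite_monic d
  have hsup : ∀ S : Set K[X], (∀ f ∈ S, f.Monic ∧ f.natDegree = d) → S.Finite :=
    fun S hS => hfinM.subset (fun f hf => hS f hf)
  have hpart : {f ∈ M | f.coeff (d - 1) = 0} =
      T ∪ ({f ∈ NS | f.coeff (d - 1) = 0} ∪ {f ∈ IR | f.coeff (d - 1) = 0}) := by
    ext f
    simp only [hM, hNS, hIR, hT, Set.mem_setOf_eq, Set.mem_union, Set.sep_setOf, hd2n]
    constructor
    · rintro ⟨⟨hm, hdeg⟩, hc⟩
      by_cases hsq : Squarefree f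
      · by_cases hirr : Irreducible f
        · exact Or.inr (Or.inr ⟨⟨hm, hdeg, hirr⟩, hc⟩)
        · exact Or.inl ⟨hm, hdeg, hc, (PerfectField.separable_iff_squarefree).mpr hsq, hirr⟩
      · exact Or.inr (Or.inl ⟨⟨hm, hdeg, hsq⟩, hc⟩)
    · rintro (⟨hm, hdeg, hc, _, _⟩ | ⟨⟨hm, hdeg, _⟩, hc⟩ | ⟨⟨hm, hdeg, _⟩, hc⟩) <;>
        exact ⟨⟨hm, hdeg⟩, hc⟩
  have hdisj1 : Disjoint T ({f ∈ NS | f.coeff (d - 1) = 0} ∪ {f ∈ IR | f.coeff (d - 1) = 0}) := by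
    rw [Set.disjoint_left]
    rintro f ⟨hm, hdeg, hc, hsep, hni⟩ (⟨⟨-, -, hsq⟩, -⟩ | ⟨⟨-, -, hirr⟩, -⟩)
    · exact hsq ((PerfectField.separable_iff_squarefree).mp hsep)
    · exact hni hirr
  have hdisj2 : Disjoint ({f ∈ NS | f.coeff (d - 1) = 0}) ({f ∈ IR | f.coeff (d - 1) = 0}) := by
    rw [Set.disjoint_left]
    rintro f ⟨⟨-, -, hsq⟩, -⟩ ⟨⟨-, -, hirr⟩, -⟩
    exact hsq ((PerfectField.separable_iff_squarefree).mp
      (PerfectField.separable_of_irreducible hirr))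
  have hTfin : T.Finite := hsup T (fun f hf => ⟨hf.1, hf.2.1⟩)
  have hNS0fin : ({f ∈ NS | f.coeff (d - 1) = 0}).Finite :=
    hsup _ (fun f hf => ⟨hf.1.1, hf.1.2.1⟩)
  have hIR0fin : ({f ∈ IR | f.coeff (d - 1) = 0}).Finite :=
    hsup _ (fun f hf => ⟨hf.1.1, hf.1.2.1⟩)
  have hsum : T.ncard + (({f ∈ NS | f.coeff (d - 1) = 0}).ncard
      + ({f ∈ IR | f.coeff (d - 1) = 0}).ncard) = p ^ (2 * n) := by
    rw [← Set.ncard_union_eq hdisj2 hNS0fin hIR0fin,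
      ← Set.ncard_union_eq hdisj1 hTfin (hNS0fin.union hIR0fin), ← hpart, hM0]
  -- identify Nat.card with T.ncard
  have hcardT : (Nat.card {f : Polynomial (ZMod p) // f.Monic ∧ f.natDegree = 2 * n + 1 ∧
      f.coeff (2 * n) = 0 ∧ f.Separable ∧ ¬ Irreducible f}) = T.ncard := by
    rw [← Nat.card_coe_set_eq]
    exact Nat.card_congr (Equiv.subtypeEquivRight (fun f => by
      simp only [hT, Set.mem_setOf_eq, ← hd]))
  rw [hcardT]
  -- real arithmetic
  set A := T.ncard with hA
  set s := ({f ∈ NS | f.coeff (d - 1) = 0}).ncard with hs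
  set i := ({f ∈ IR | f.coeff (d - 1) = 0}).ncard with hi
  have hP1 : (1 : ℝ) ≤ (p : ℝ) := by exact_mod_cast hp.one_lt.le
  have hP0 : (0 : ℝ) < (p : ℝ) := by positivity
  have hF1 : (A : ℝ) + s + i = (p : ℝ) ^ (2 * n) := by
    have h := congrArg (fun t : ℕ => (t : ℝ)) hsum
    push_cast at h
    linarith
  have hF2 : (p : ℝ) * s ≤ n * (p : ℝ) ^ (2 * n) := by exact_mod_cast hNS0
  have hF3 : (d : ℝ) * ((p : ℝ) * i) ≤ (p : ℝ) ^ d := by exact_mod_cast hIRle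
  have hF4 : (p : ℝ) ^ d ≤ (d : ℝ) * ((p : ℝ) * i) + n * (p : ℝ) ^ n := by
    exact_mod_cast hIRge
  have hpow1 : (p : ℝ) ^ (2 * n - 1) * (p : ℝ) = (p : ℝ) ^ (2 * n) := by
    rw [← pow_succ]
    congr 1
    omega
  have hpow2 : (p : ℝ) ^ n ≤ (p : ℝ) ^ (2 * n) := pow_le_pow_right₀ hP1 (by omega)
  have hpow3 : (p : ℝ) ^ d = (p : ℝ) ^ (2 * n) * (p : ℝ) := by
    rw [hd, pow_succ]
  have hdR : (d : ℝ) = 2 * n + 1 := by rw [hd]; push_cast; ring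
  have hdpos : (0 : ℝ) < (d : ℝ) := by rw [hdR]; positivity
  -- reduce to multiplied form
  rw [hpow3, hdR] at hF3 hF4
  have hiR : (0:ℝ) ≤ i := Nat.cast_nonneg i
  have hsR : (0:ℝ) ≤ s := Nat.cast_nonneg s
  have hA2n : (A : ℝ) = (p : ℝ) ^ (2*n) - s - i := by linarith
  have hQ0 : (0:ℝ) ≤ (p:ℝ) ^ (2*n) := by positivity
  have e2 : (n:ℝ) * (p:ℝ) ^ n ≤ (n:ℝ) * (p:ℝ) ^ (2*n) :=
    mul_le_mul_of_nonneg_left hpow2 (by positivity)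
  have e1 : (2*(n:ℝ)+1) * ((p:ℝ) * s) ≤ (2*(n:ℝ)+1) * ((n:ℝ) * (p:ℝ) ^ (2*n)) :=
    mul_le_mul_of_nonneg_left hF2 (by positivity)
  have hn0 : (0:ℝ) ≤ (n:ℝ) := Nat.cast_nonneg n
  rw [abs_le]
  constructor
  · rw [← sub_nonneg]
    have key : ((A:ℝ) - (p:ℝ)^(2*n) * ((2*n:ℝ)/(2*n+1))) - (-(((n:ℝ) + 1) * (p:ℝ) ^ (2*n - 1)))
        = (((d:ℝ) * (p:ℝ) * (A:ℝ) - 2*n*((p:ℝ)^(2*n) * (p:ℝ)))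
          + ((n:ℝ)+1) * ((p:ℝ) ^ (2*n-1) * (p:ℝ)) * (d:ℝ)) / ((d:ℝ) * (p:ℝ)) := by
      field_simp
      rw [hdR]
      ring
    rw [key]
    apply div_nonneg _ (by positivity)
    rw [hpow1, hA2n, hdR]
    nlinarith [hF3, hF4, e1, e2, hsR, hiR, hP0.le, hQ0, hn0,
      mul_nonneg (mul_nonneg hn0 hn0) hQ0, mul_nonneg hn0 hQ0,
      mul_nonneg hn0 (mul_nonneg hP0.le hsR), mul_nonneg hP0.le hsR,
      mul_nonneg hP0.le hiR, mul_nonneg hn0 (mul_nonneg hP0.le hiR)]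
  · rw [← sub_nonneg]
    have key : ((n:ℝ) + 1) * (p:ℝ) ^ (2*n - 1) - ((A:ℝ) - (p:ℝ)^(2*n) * ((2*n:ℝ)/(2*n+1)))
        = (((n:ℝ)+1) * ((p:ℝ) ^ (2*n-1) * (p:ℝ)) * (d:ℝ)
          - ((d:ℝ) * (p:ℝ) * (A:ℝ) - 2*n*((p:ℝ)^(2*n) * (p:ℝ)))) / ((d:ℝ) * (p:ℝ)) := by
      field_simp
      rw [hdR]
      ring
    rw [key]
    apply div_nonneg _ (by positivity)
    rw [hpow1, hA2n, hdR]
    nlinarith [hF3, hF4, e1, e2, hsR, hiR, hP0.le, hQ0, hn0,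
      mul_nonneg (mul_nonneg hn0 hn0) hQ0, mul_nonneg hn0 hQ0,
      mul_nonneg hn0 (mul_nonneg hP0.le hsR), mul_nonneg hP0.le hsR,
      mul_nonneg hP0.le hiR, mul_nonneg hn0 (mul_nonneg hP0.le hiR)]
end

section
/- Let $B$ be a symmetric $(2n+1) \times (2n+1)$ matrix over a field $k$ of characteristic not $2$, and let $A$ be the anti-diagonal matrix with $1$'s on the anti-diagonal. Suppose that for some $k_0 \in \{1,\ldots,n\}$, the top-left $k_0 \times (2n+1-k_0)$ block of entries of $B$ are all zero. Then the discriminant of the polynomial $\det(Ax - B)$ in $x$ is zero. -/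
open Polynomial

/-- If `B` is a symmetric `(2n+1)×(2n+1)` matrix over a field of characteristic ≠ 2
whose top-left `k₀ × (2n+1-k₀)` block vanishes for some `1 ≤ k₀ ≤ n`, then the
polynomial `det(Ax - B)` (where `A` is the anti-diagonal matrix of 1's) has a
repeated root, i.e. is not separable (its discriminant vanishes). -/
theorem stmt6 (n : ℕ) (k : Type*) [Field k] (hchar : (2 : k) ≠ 0)
    (A B : Matrix (Fin (2 * n + 1)) (Fin (2 * n + 1)) k)
    (hA : ∀ i j, A i j = if (i : ℕ) + (j : ℕ) = 2 * n then 1 else 0)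
    (hB : B.IsSymm)
    (k₀ : ℕ) (hk₀1 : 1 ≤ k₀) (hk₀n : k₀ ≤ n)
    (hzero : ∀ i j : Fin (2 * n + 1), (i : ℕ) < k₀ → (j : ℕ) < 2 * n + 1 - k₀ → B i j = 0) :
    ¬ (((X : Polynomial k) • A.map C - B.map C).det).Separable := by
  intro hsep
  have hsf : Squarefree (((X : Polynomial k) • A.map C - B.map C).det) := hsep.squarefree
  set m := 2 * n + 1 - 2 * k₀ with hmdef
  have hm : k₀ + (m + k₀) = 2 * n + 1 := by omega
  set M : Matrix (Fin (2 * n + 1)) (Fin (2 * n + 1)) (Polynomial k) :=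
    (X : Polynomial k) • A.map C - B.map C with hM
  have hMentry : ∀ i j, M i j = X * C (A i j) - C (B i j) := by
    intro i j
    simp [hM, Matrix.sub_apply, Matrix.smul_apply, Matrix.map_apply, smul_eq_mul]
  -- the index equivalence
  let e : (Fin k₀ ⊕ (Fin m ⊕ Fin k₀)) ≃ Fin (2 * n + 1) :=
    ((Equiv.sumCongr (Equiv.refl (Fin k₀)) finSumFinEquiv).trans finSumFinEquiv).trans
      (finCongr hm)
  have he1 : ∀ a : Fin k₀, ((e (Sum.inl a)) : ℕ) = (a : ℕ) := by
    intro a; simp [e]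
  have he2 : ∀ b : Fin m, ((e (Sum.inr (Sum.inl b))) : ℕ) = k₀ + (b : ℕ) := by
    intro b; simp [e]
  have he3 : ∀ c : Fin k₀, ((e (Sum.inr (Sum.inr c))) : ℕ) = k₀ + (m + (c : ℕ)) := by
    intro c; simp [e, add_assoc]
  -- the column rotation
  let r : (Fin k₀ ⊕ (Fin m ⊕ Fin k₀)) ≃ (Fin k₀ ⊕ (Fin m ⊕ Fin k₀)) :=
    (Equiv.sumComm _ _).trans ((Equiv.sumCongr (Equiv.sumComm _ _) (Equiv.refl _)).trans
      (Equiv.sumAssoc _ _ _))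
  have hr1 : ∀ a : Fin k₀, r (Sum.inl a) = Sum.inr (Sum.inr a) := fun _ => rfl
  have hr2 : ∀ b : Fin m, r (Sum.inr (Sum.inl b)) = Sum.inr (Sum.inl b) := fun _ => rfl
  have hr3 : ∀ c : Fin k₀, r (Sum.inr (Sum.inr c)) = Sum.inl c := fun _ => rfl
  -- symmetry of M
  have hMsymm : ∀ i j, M i j = M j i := by
    intro i j
    rw [hMentry, hMentry, hA, hA, hB.apply j i, add_comm (i : ℕ)]
  -- zero entries
  have hz : ∀ i j : Fin (2 * n + 1), (i : ℕ) + (j : ℕ) ≠ 2 * n → B i j = 0 → M i j = 0 := by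
    intro i j h1 h2
    rw [hMentry, hA, if_neg h1, h2]
    simp
  -- the blocks
  let P : Matrix (Fin k₀) (Fin k₀) (Polynomial k) :=
    Matrix.of fun a c => M (e (Sum.inl a)) (e (Sum.inr (Sum.inr c)))
  let Q : Matrix (Fin m ⊕ Fin k₀) (Fin k₀) (Polynomial k) :=
    Matrix.of fun x c => M (e (Sum.inr x)) (e (Sum.inr (Sum.inr c)))
  let R11 : Matrix (Fin m) (Fin m) (Polynomial k) :=
    Matrix.of fun b b' => M (e (Sum.inr (Sum.inl b))) (e (Sum.inr (Sum.inl b')))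
  let R21 : Matrix (Fin k₀) (Fin m) (Polynomial k) :=
    Matrix.of fun c b' => M (e (Sum.inr (Sum.inr c))) (e (Sum.inr (Sum.inl b')))
  let R22 : Matrix (Fin k₀) (Fin k₀) (Polynomial k) :=
    Matrix.of fun c c' => M (e (Sum.inr (Sum.inr c))) (e (Sum.inl c'))
  let RR : Matrix (Fin m ⊕ Fin k₀) (Fin m ⊕ Fin k₀) (Polynomial k) :=
    Matrix.fromBlocks R11 0 R21 R22
  have hblock : M.submatrix e (r.trans e) = Matrix.fromBlocks P 0 Q RR := by
    refine Matrix.ext fun i j => ?_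
    rcases i with a | b | c <;> rcases j with a' | b' | c'
    · rfl
    · -- row in first block, column in middle block: zero
      show M (e (Sum.inl a)) (e (Sum.inr (Sum.inl b'))) = 0
      refine hz _ _ ?_ (hzero _ _ ?_ ?_)
      · rw [he1, he2]; have := a.isLt; have := b'.isLt; omega
      · rw [he1]; exact a.isLt
      · rw [he2]; have := b'.isLt; omega
    · -- row in first block, column in last block (C1): zero
      show M (e (Sum.inl a)) (e (Sum.inl c')) = 0
      refine hz _ _ ?_ (hzero _ _ ?_ ?_)
      · rw [he1, he1]; have := a.isLt; have := c'.isLt; omega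
      · rw [he1]; exact a.isLt
      · rw [he1]; have := c'.isLt; omega
    · rfl
    · rfl
    · -- row in middle block, column in C1: zero
      show M (e (Sum.inr (Sum.inl b))) (e (Sum.inl c')) = 0
      refine hz _ _ ?_ ?_
      · rw [he2, he1]; have := b.isLt; have := c'.isLt; omega
      · refine (hB.apply _ _).trans (hzero _ _ ?_ ?_)
        · rw [he1]; exact c'.isLt
        · rw [he2]; have := b.isLt; omega
    · rfl
    · rfl
    · rfl
  -- determinant identity
  have heq : ((Equiv.Perm.sign r : ℤ) : Polynomial k) * M.det =
      P.det * (R11.det * R22.det) := by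
    have h0 : M.submatrix e (r.trans e) = (M.submatrix e e).submatrix id r := rfl
    calc ((Equiv.Perm.sign r : ℤ) : Polynomial k) * M.det
        = ((M.submatrix e e).submatrix id r).det := by
          rw [Matrix.det_permute', Matrix.det_submatrix_equiv_self]
      _ = (Matrix.fromBlocks P 0 Q RR).det := by rw [← h0, hblock]
      _ = P.det * RR.det := Matrix.det_fromBlocks_zero₁₂ _ _ _
      _ = P.det * (R11.det * R22.det) := by
          rw [show RR.det = R11.det * R22.det from Matrix.det_fromBlocks_zero₁₂ _ _ _]
  have hR22 : R22 = P.transpose := by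
    refine Matrix.ext fun c c' => hMsymm _ _
  -- P is a polynomial matrix x·J - B' with J an invertible scalar matrix
  let J : Matrix (Fin k₀) (Fin k₀) k :=
    Matrix.of fun a c => if (a : ℕ) + (c : ℕ) = k₀ - 1 then 1 else 0
  let B' : Matrix (Fin k₀) (Fin k₀) k :=
    Matrix.of fun a c => B (e (Sum.inl a)) (e (Sum.inr (Sum.inr c)))
  have hP : P = (X : Polynomial k) • J.map C - B'.map C := by
    refine Matrix.ext fun a c => ?_
    have h1 := he1 a
    have h3 := he3 c
    show M (e (Sum.inl a)) (e (Sum.inr (Sum.inr c))) = X * C (J a c) - C (B' a c)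
    rw [hMentry, hA]
    have hcond : ((e (Sum.inl a)) : ℕ) + ((e (Sum.inr (Sum.inr c))) : ℕ) = 2 * n ↔
        (a : ℕ) + (c : ℕ) = k₀ - 1 := by
      rw [h1, h3]; have := a.isLt; have := c.isLt; omega
    by_cases hac : (a : ℕ) + (c : ℕ) = k₀ - 1
    · rw [if_pos (hcond.mpr hac)]
      show _ = X * C (if _ then _ else _) - _
      rw [if_pos hac]
      rfl
    · rw [if_neg (fun h => hac (hcond.mp h))]
      show _ = X * C (if _ then _ else _) - _
      rw [if_neg hac]
      rfl
  have hJ : J = (1 : Matrix (Fin k₀) (Fin k₀) k).submatrix Fin.revPerm id := by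
    refine Matrix.ext fun a c => ?_
    rw [Matrix.submatrix_apply, Matrix.one_apply]
    show (if (a : ℕ) + (c : ℕ) = k₀ - 1 then (1 : k) else 0) = _
    have hrev : (Fin.rev a : ℕ) = k₀ - (a + 1) := Fin.val_rev a
    by_cases h : (a : ℕ) + (c : ℕ) = k₀ - 1
    · rw [if_pos h, if_pos]
      refine Fin.ext ?_
      show (Fin.rev a : ℕ) = c
      rw [hrev]; have := a.isLt; have := c.isLt; omega
    · rw [if_neg h, if_neg]
      intro hcon
      apply h
      have : ((Fin.revPerm a : Fin k₀) : ℕ) = (c : ℕ) := by rw [hcon]; rfl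
      rw [show ((Fin.revPerm a : Fin k₀) : ℕ) = (Fin.rev a : ℕ) from rfl, hrev] at this
      have := a.isLt; have := c.isLt; omega
  have hJunit : IsUnit J.det := by
    rw [hJ, Matrix.det_permute, Matrix.det_one, mul_one]
    exact (Equiv.Perm.sign (Fin.revPerm : Equiv.Perm (Fin k₀))).isUnit.map (Int.castRingHom k)
  have hJinv : J * J⁻¹ = 1 := Matrix.mul_nonsing_inv J hJunit
  have hfact : P = J.map C * Matrix.charmatrix (J⁻¹ * B') := by
    rw [hP, Matrix.charmatrix, Matrix.mul_sub]
    congr 1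
    · refine Matrix.ext fun i j => ?_
      rw [Matrix.scalar_apply, Matrix.mul_diagonal, Matrix.smul_apply, smul_eq_mul, mul_comm]
    · show B'.map C = J.map C * (J⁻¹ * B').map C
      rw [← Matrix.map_mul, ← mul_assoc, hJinv, one_mul]
  have hdetP : P.det = C J.det * Matrix.charpoly (J⁻¹ * B') := by
    rw [hfact, Matrix.det_mul, Matrix.charpoly]
    congr 1
    exact (RingHom.map_det (C : k →+* Polynomial k) J).symm ▸ rfl
  have hPunit : ¬ IsUnit P.det := by
    intro h
    rw [hdetP] at h
    have h2 : IsUnit (Matrix.charpoly (J⁻¹ * B')) := isUnit_of_mul_isUnit_right h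
    have h4 := Polynomial.natDegree_eq_zero_of_isUnit h2
    rw [Matrix.charpoly_natDegree_eq_dim] at h4
    simp [Fintype.card_fin] at h4
    omega
  -- conclude
  have hu : IsUnit ((Equiv.Perm.sign r : ℤ) : Polynomial k) :=
    (Equiv.Perm.sign r).isUnit.map (Int.castRingHom (Polynomial k))
  have hd1 : P.det * P.det ∣ ((Equiv.Perm.sign r : ℤ) : Polynomial k) * M.det :=
    ⟨R11.det, by rw [heq, hR22, Matrix.det_transpose]; ring⟩
  obtain ⟨u, hu'⟩ := hu
  have hd2 : ((Equiv.Perm.sign r : ℤ) : Polynomial k) * M.det ∣ M.det :=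
    ⟨((u⁻¹ : (Polynomial k)ˣ) : Polynomial k), by
      rw [← hu', mul_comm ((u : Polynomial k)) M.det, mul_assoc, Units.mul_inv, mul_one]⟩
  exact hPunit (hsf P.det (hd1.trans hd2))
end

section
/- For each $n \geq 1$ and each subset $U_0$ of the set $U^- = \{(i,j) : 1 \leq i \leq j,\ i + j < 2n+1\}$, define for $k = 1,\ldots,n$ the quantity $e_k(U_0) = \sum_{(i,j) \in U_0} e_k(i,j)$, where $e_k(i,j)$ is the exponent of $s_k$ (negated) in the weight $w(b_{ij}) = \lambda \cdot s_1^{-2}\cdots s_n^{-2}\cdot (w_1\cdots w_{i-1})(w_1\cdots w_{j-1})$ with $(w_1,\ldots,w_{2n}) = (s_1,\ldots,s_n,s_n,\ldots,s_1)$. Then $\sum_{k=1}^n \max\{0,\ e_k(U_0) + k^2 - 2kn\} \leq |U_0|$, with equality if and only if $U_0 = \varnothing$ or $U_0 = U^-$. -/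
/-- `wIdx n m` is the index `k` such that `w_m = s_k`, where
`(w_1,…,w_{2n}) = (s_1,…,s_n,s_n,…,s_1)`. -/
def wIdx (n m : ℕ) : ℕ := if m ≤ n then m else 2 * n + 1 - m

/-- `eSingle n k i j = e_k(i,j)`, the negated exponent of `s_k` in the weight
`w(b_{ij}) = λ·s₁⁻²⋯s_n⁻²·(w₁⋯w_{i-1})(w₁⋯w_{j-1})`. -/
def eSingle (n k i j : ℕ) : ℤ :=
  2 - (((Finset.Icc 1 (i - 1)).filter (fun m => wIdx n m = k)).card : ℤ)
    - (((Finset.Icc 1 (j - 1)).filter (fun m => wIdx n m = k)).card : ℤ)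

/-- The set `U⁻` of pairs `(i,j)` with `1 ≤ i ≤ j` and `i + j < 2n+1`. -/
def Uminus (n : ℕ) : Finset (ℕ × ℕ) :=
  (Finset.Icc 1 (2 * n) ×ˢ Finset.Icc 1 (2 * n)).filter
    (fun p => p.1 ≤ p.2 ∧ p.1 + p.2 < 2 * n + 1)

namespace Stmt7

lemma wIdx_eq_iff {n m k : ℕ} (hk1 : 1 ≤ k) (hkn : k ≤ n) :
    wIdx n m = k ↔ m = k ∨ m = 2 * n + 1 - k := by
  unfold wIdx; split <;> omega

lemma mem_Uminus {n : ℕ} {p : ℕ × ℕ} :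
    p ∈ Uminus n ↔ 1 ≤ p.1 ∧ p.1 ≤ p.2 ∧ p.1 + p.2 ≤ 2 * n := by
  simp only [Uminus, Finset.mem_filter, Finset.mem_product, Finset.mem_Icc]
  omega

lemma cardFilter {n k : ℕ} (hk1 : 1 ≤ k) (hkn : k ≤ n) (M : ℕ) :
    (((Finset.Icc 1 M).filter (fun m => wIdx n m = k)).card : ℤ) =
      (if k ≤ M then 1 else 0) + (if 2 * n + 1 - k ≤ M then 1 else 0) := by
  have h1 : (Finset.Icc 1 M).filter (fun m => wIdx n m = k)
      = (Finset.Icc 1 M).filter (fun m => m = k ∨ m = 2 * n + 1 - k) := by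
    apply Finset.filter_congr
    intro m _
    simpa using wIdx_eq_iff hk1 hkn (m := m)
  rw [h1, Finset.filter_or, Finset.filter_eq', Finset.filter_eq']
  rw [Finset.card_union_of_disjoint]
  · simp only [Finset.mem_Icc, Nat.cast_add]
    split_ifs <;> simp_all <;> omega
  · have : k ≠ 2 * n + 1 - k := by omega
    split_ifs <;> simp_all <;> omega

/-- indicator version of `eSingle` for pairs in `U⁻`. -/
def eInd (n k : ℕ) (p : ℕ × ℕ) : ℤ :=
  (if p.1 ≤ k then 1 else 0) + (if p.2 ≤ k then 1 else 0)
    - (if 2 * n + 2 - k ≤ p.2 then 1 else 0)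

lemma eSingle_eq_eInd {n k : ℕ} (hk1 : 1 ≤ k) (hkn : k ≤ n) {p : ℕ × ℕ}
    (hp : p ∈ Uminus n) : eSingle n k p.1 p.2 = eInd n k p := by
  obtain ⟨h1, h2, h3⟩ := mem_Uminus.mp hp
  unfold eSingle eInd
  rw [cardFilter hk1 hkn, cardFilter hk1 hkn]
  split_ifs <;> omega

/-- the indicator of the fiber `wIdx n p.2 = k`. -/
def ind (n k : ℕ) (p : ℕ × ℕ) : ℤ := if wIdx n p.2 = k then 1 else 0

lemma eInd_ge_ind {n k : ℕ} (hk1 : 1 ≤ k) (hkn : k ≤ n) {p : ℕ × ℕ}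
    (hp : p ∈ Uminus n) : ind n k p ≤ eInd n k p := by
  obtain ⟨h1, h2, h3⟩ := mem_Uminus.mp hp
  unfold ind eInd wIdx
  split_ifs <;> omega

lemma rowCard {n r : ℕ} (h1 : 1 ≤ r) (h2 : r ≤ n) :
    ((Uminus n).filter (fun p => p.1 = r)).card = 2 * n + 1 - 2 * r := by
  have : (Uminus n).filter (fun p => p.1 = r) = {r} ×ˢ Finset.Icc r (2 * n - r) := by
    ext p
    simp only [Finset.mem_filter, mem_Uminus, Finset.mem_product, Finset.mem_singleton,
      Finset.mem_Icc]
    omega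
  rw [this, Finset.card_product, Finset.card_singleton, Nat.card_Icc]
  omega

lemma colCard {n c : ℕ} :
    ((Uminus n).filter (fun p => p.2 = c)).card = min c (2 * n - c) := by
  have : (Uminus n).filter (fun p => p.2 = c) = Finset.Icc 1 (min c (2 * n - c)) ×ˢ {c} := by
    ext p
    simp only [Finset.mem_filter, mem_Uminus, Finset.mem_product, Finset.mem_singleton,
      Finset.mem_Icc]
    omega
  rw [this, Finset.card_product, Finset.card_singleton, Nat.card_Icc]
  omega

lemma fiberCard {n k : ℕ} (hk1 : 1 ≤ k) (hkn : k ≤ n) :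
    ((Uminus n).filter (fun p => wIdx n p.2 = k)).card = 2 * k - 1 := by
  have : (Uminus n).filter (fun p => wIdx n p.2 = k)
      = (Finset.Icc 1 k ×ˢ {k}) ∪ (Finset.Icc 1 (k - 1) ×ˢ {2 * n + 1 - k}) := by
    ext p
    simp only [Finset.mem_filter, mem_Uminus, Finset.mem_union, Finset.mem_product,
      Finset.mem_singleton, Finset.mem_Icc, wIdx_eq_iff hk1 hkn]
    omega
  rw [this, Finset.card_union_of_disjoint, Finset.card_product, Finset.card_product]
  · simp only [Finset.card_singleton, Nat.card_Icc]
    omega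
  · rw [Finset.disjoint_left]
    intro p hp hq
    simp only [Finset.mem_product, Finset.mem_singleton, Finset.mem_Icc] at hp hq
    omega

lemma sumE {n : ℕ} (hn : 1 ≤ n) :
    ∀ k, 1 ≤ k → k ≤ n →
      ∑ p ∈ Uminus n, eInd n k p = 2 * k * n - (k : ℤ) ^ 2 + 2 * k - 1 := by
  intro k
  induction k with
  | zero => omega
  | succ k ih =>
    intro _ hkn
    rcases Nat.eq_zero_or_pos k with hk0 | hk1
    · subst hk0
      have h1 : ∀ p ∈ Uminus n, eInd n 1 p =
          (if p.1 = 1 then 1 else 0) + (if p.2 = 1 then 1 else 0)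
            - (if p.2 = 2 * n + 1 then 1 else 0) := by
        intro p hp
        have := mem_Uminus.mp hp
        unfold eInd
        split_ifs <;> omega
      rw [Finset.sum_congr rfl h1]
      rw [Finset.sum_sub_distrib, Finset.sum_add_distrib, Finset.sum_boole,
        Finset.sum_boole, Finset.sum_boole]
      rw [rowCard le_rfl hn, colCard, colCard]
      have h2 : min 1 (2 * n - 1) = 1 := by omega
      rw [h2]
      have h3 : min (2 * n + 1) (2 * n - (2 * n + 1)) = 0 := by omega
      rw [h3]
      have h4 : ((2 * n + 1 - 2 * 1 : ℕ) : ℤ) = 2 * n - 1 := by omega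
      rw [h4]
      push_cast
      ring
    · have ih' := ih hk1 (by omega)
      have hsplit : ∀ p ∈ Uminus n, eInd n (k + 1) p = eInd n k p +
          ((if p.1 = k + 1 then 1 else 0) + (if p.2 = k + 1 then 1 else 0)
            - (if p.2 = 2 * n + 1 - k then 1 else 0)) := by
        intro p hp
        have := mem_Uminus.mp hp
        unfold eInd
        split_ifs <;> omega
      rw [Finset.sum_congr rfl hsplit, Finset.sum_add_distrib, ih']
      rw [Finset.sum_sub_distrib, Finset.sum_add_distrib, Finset.sum_boole,
        Finset.sum_boole, Finset.sum_boole]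
      have hA : (((Uminus n).filter (fun p => p.1 = k + 1)).card : ℤ)
          = 2 * n - 1 - 2 * k := by
        rw [rowCard (by omega) hkn]; omega
      have hB : (((Uminus n).filter (fun p => p.2 = k + 1)).card : ℤ) = k + 1 := by
        rw [colCard]; omega
      have hC : (((Uminus n).filter (fun p => p.2 = 2 * n + 1 - k)).card : ℤ)
          = k - 1 := by
        rw [colCard]; omega
      rw [hA, hB, hC]
      push_cast
      ring

lemma phi_mem {n : ℕ} {p : ℕ × ℕ} (hp : p ∈ Uminus n) : wIdx n p.2 ∈ Finset.Icc 1 n := by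
  obtain ⟨h1, h2, h3⟩ := mem_Uminus.mp hp
  simp only [Finset.mem_Icc]
  unfold wIdx
  split <;> omega

/-- sum of the fiber indicator over a set is the fiber-card. -/
lemma sum_ind {n k : ℕ} (s : Finset (ℕ × ℕ)) :
    ∑ p ∈ s, ind n k p = ((s.filter (fun p => wIdx n p.2 = k)).card : ℤ) := by
  simp only [ind]
  rw [Finset.sum_boole]

/-- the key pointwise (in `k`) upper bound. -/
lemma key_bound {n : ℕ} (hn : 1 ≤ n) {U₀ : Finset (ℕ × ℕ)} (hU₀ : U₀ ⊆ Uminus n)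
    {k : ℕ} (hk1 : 1 ≤ k) (hkn : k ≤ n) :
    (∑ p ∈ U₀, eInd n k p) + (k : ℤ) ^ 2 - 2 * k * n ≤
      ((U₀.filter (fun p => wIdx n p.2 = k)).card : ℤ) := by
  have h1 : ∑ p ∈ U₀, (eInd n k p - ind n k p) ≤
      ∑ p ∈ Uminus n, (eInd n k p - ind n k p) := by
    apply Finset.sum_le_sum_of_subset_of_nonneg hU₀
    intro p hp _
    have := eInd_ge_ind hk1 hkn hp
    linarith
  rw [Finset.sum_sub_distrib, Finset.sum_sub_distrib, sum_ind, sum_ind,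
    sumE hn k hk1 hkn, fiberCard hk1 hkn] at h1
  have h2 : ((2 * k - 1 : ℕ) : ℤ) = 2 * k - 1 := by omega
  rw [h2] at h1
  linarith

/-- the saturation lemma: if the `k`-th equality holds but some element of
`V = U⁻ \ U₀` has an excess at level `k`, then the whole `k`-fiber lies in `V`. -/
lemma saturate {n : ℕ} (hn : 1 ≤ n) {U₀ : Finset (ℕ × ℕ)} (hU₀ : U₀ ⊆ Uminus n)
    {k : ℕ} (hk1 : 1 ≤ k) (hkn : k ≤ n)
    (heqk : max 0 ((∑ p ∈ U₀, eInd n k p) + (k : ℤ) ^ 2 - 2 * k * n) =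
      ((U₀.filter (fun p => wIdx n p.2 = k)).card : ℤ))
    {p : ℕ × ℕ} (hp : p ∈ Uminus n \ U₀) (hex : ind n k p + 1 ≤ eInd n k p) :
    (Uminus n).filter (fun q => wIdx n q.2 = k) ⊆ Uminus n \ U₀ := by
  set V := Uminus n \ U₀ with hV
  have hVsub : V ⊆ Uminus n := Finset.sdiff_subset
  -- excess : ∑_V ind + 1 ≤ ∑_V eInd
  have h1 : (∑ q ∈ V, ind n k q) + 1 ≤ ∑ q ∈ V, eInd n k q := by
    have hs : eInd n k p - ind n k p ≤ ∑ q ∈ V, (eInd n k q - ind n k q) := by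
      apply Finset.single_le_sum (f := fun q => eInd n k q - ind n k q)
      · intro q hq
        have := eInd_ge_ind hk1 hkn (hVsub hq)
        linarith
      · exact hp
    rw [Finset.sum_sub_distrib] at hs
    linarith
  have hEs : (∑ q ∈ V, eInd n k q) + ∑ p ∈ U₀, eInd n k p = ∑ p ∈ Uminus n, eInd n k p :=
    Finset.sum_sdiff hU₀
  have hIs : (∑ q ∈ V, ind n k q) + ∑ p ∈ U₀, ind n k p = ∑ p ∈ Uminus n, ind n k p :=
    Finset.sum_sdiff hU₀
  rw [sum_ind, sum_ind, sum_ind, fiberCard hk1 hkn] at hIs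
  have hSE := sumE hn k hk1 hkn
  have hcast : ((2 * k - 1 : ℕ) : ℤ) = 2 * k - 1 := by omega
  rw [hcast] at hIs
  -- conclude the V-fiber has full cardinality 2k-1
  rw [sum_ind] at h1
  have hcardV : ((V.filter (fun q => wIdx n q.2 = k)).card : ℤ) = 2 * k - 1 := by
    rcases max_choice 0 ((∑ p ∈ U₀, eInd n k p) + (k : ℤ) ^ 2 - 2 * k * n) with hmx | hmx <;>
      rw [hmx] at heqk <;> linarith
  have hsub : V.filter (fun q => wIdx n q.2 = k) ⊆
      (Uminus n).filter (fun q => wIdx n q.2 = k) :=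
    Finset.filter_subset_filter _ hVsub
  have hfc := fiberCard (n := n) hk1 hkn
  have heq2 : V.filter (fun q => wIdx n q.2 = k) =
      (Uminus n).filter (fun q => wIdx n q.2 = k) := by
    apply Finset.eq_of_subset_of_card_le hsub
    omega
  rw [← heq2]
  exact Finset.filter_subset _ _

end Stmt7

open Stmt7 in
/-- The combinatorial cusp lemma: for `U₀ ⊆ U⁻`,
`∑_{k=1}^n max{0, e_k(U₀) + k² - 2kn} ≤ |U₀|`, with equality iff `U₀ = ∅` or `U₀ = U⁻`. -/
theorem stmt7 (n : ℕ) (hn : 1 ≤ n) (U₀ : Finset (ℕ × ℕ)) (hU₀ : U₀ ⊆ Uminus n) :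
    (∑ k ∈ Finset.Icc 1 n,
        max 0 ((∑ p ∈ U₀, eSingle n k p.1 p.2) + (k : ℤ) ^ 2 - 2 * k * n) ≤ (U₀.card : ℤ)) ∧
    ((∑ k ∈ Finset.Icc 1 n,
        max 0 ((∑ p ∈ U₀, eSingle n k p.1 p.2) + (k : ℤ) ^ 2 - 2 * k * n) = (U₀.card : ℤ)) ↔
      (U₀ = ∅ ∨ U₀ = Uminus n)) := by
  -- convert `eSingle` sums into `eInd` sums
  have hconv : ∀ k ∈ Finset.Icc 1 n,
      (∑ p ∈ U₀, eSingle n k p.1 p.2) = ∑ p ∈ U₀, eInd n k p := by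
    intro k hk
    rw [Finset.mem_Icc] at hk
    exact Finset.sum_congr rfl fun p hp => eSingle_eq_eInd hk.1 hk.2 (hU₀ hp)
  have hmax : ∀ k ∈ Finset.Icc 1 n,
      max 0 ((∑ p ∈ U₀, eSingle n k p.1 p.2) + (k : ℤ) ^ 2 - 2 * k * n) =
        max 0 ((∑ p ∈ U₀, eInd n k p) + (k : ℤ) ^ 2 - 2 * k * n) := by
    intro k hk; rw [hconv k hk]
  rw [Finset.sum_congr rfl hmax]
  -- fiberwise card decomposition of U₀
  have hcard : (U₀.card : ℤ) =
      ∑ k ∈ Finset.Icc 1 n, ((U₀.filter (fun p => wIdx n p.2 = k)).card : ℤ) := by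
    rw [← Nat.cast_sum]
    norm_cast
    exact Finset.card_eq_sum_card_fiberwise fun p hp => phi_mem (hU₀ hp)
  -- the pointwise bound
  have hle : ∀ k ∈ Finset.Icc 1 n,
      max 0 ((∑ p ∈ U₀, eInd n k p) + (k : ℤ) ^ 2 - 2 * k * n) ≤
        ((U₀.filter (fun p => wIdx n p.2 = k)).card : ℤ) := by
    intro k hk
    rw [Finset.mem_Icc] at hk
    apply max_le
    · positivity
    · exact key_bound hn hU₀ hk.1 hk.2
  constructor
  · rw [hcard]
    exact Finset.sum_le_sum hle
  constructor
  · -- equality implies U₀ = ∅ or U₀ = U⁻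
    intro hEq
    rw [hcard] at hEq
    have hptw := (Finset.sum_eq_sum_iff_of_le hle).mp hEq
    set V := Uminus n \ U₀ with hVdef
    by_cases hVempty : V = ∅
    · right
      have : Uminus n ⊆ U₀ := by
        intro p hp
        by_contra hpn
        have : p ∈ V := Finset.mem_sdiff.mpr ⟨hp, hpn⟩
        simp [hVempty] at this
      exact Finset.Subset.antisymm hU₀ this
    · left
      -- V is nonempty; show V = Uminus n, hence U₀ = ∅
      obtain ⟨p₀, hp₀⟩ := Finset.nonempty_of_ne_empty hVempty
      have hsat : ∀ k, 1 ≤ k → k ≤ n → ∀ p ∈ V, ind n k p + 1 ≤ eInd n k p →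
          (Uminus n).filter (fun q => wIdx n q.2 = k) ⊆ V := by
        intro k hk1 hkn p hp hex
        exact saturate hn hU₀ hk1 hkn (hptw k (Finset.mem_Icc.mpr ⟨hk1, hkn⟩)) hp hex
      -- Step 0 : an element of V with second coordinate ≤ n saturates the n-fiber
      have S0 : ∀ q ∈ V, q.2 ≤ n → (Uminus n).filter (fun q => wIdx n q.2 = n) ⊆ V := by
        intro q hq hq2
        apply hsat n hn le_rfl q hq
        obtain ⟨h1, h2, h3⟩ := mem_Uminus.mp (Finset.sdiff_subset hq)
        unfold ind eInd wIdx
        split_ifs <;> omega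
      -- Step 1 : the n-fiber is contained in V
      have S1 : (Uminus n).filter (fun q => wIdx n q.2 = n) ⊆ V := by
        obtain ⟨h1, h2, h3⟩ := mem_Uminus.mp (Finset.sdiff_subset hp₀)
        by_cases hj : p₀.2 ≤ n
        · exact S0 p₀ hp₀ hj
        · have hfib1 : (Uminus n).filter (fun q => wIdx n q.2 = p₀.1) ⊆ V := by
            apply hsat p₀.1 h1 (by omega) p₀ hp₀
            unfold ind eInd wIdx
            split_ifs <;> omega
          have hmem1 : ((1, p₀.1) : ℕ × ℕ) ∈ (Uminus n).filter
              (fun q => wIdx n q.2 = p₀.1) := by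
            rw [Finset.mem_filter, mem_Uminus]
            refine ⟨⟨le_rfl, h1, by omega⟩, ?_⟩
            show wIdx n p₀.1 = p₀.1
            unfold wIdx
            split <;> omega
          exact S0 (1, p₀.1) (hfib1 hmem1) (by simpa using by omega)
      -- Step 2 : downward induction, all fibers lie in V
      have S2 : ∀ d, d ≤ n - 1 → (Uminus n).filter (fun q => wIdx n q.2 = n - d) ⊆ V := by
        intro d
        induction d with
        | zero => intro _; simpa using S1
        | succ d ih =>
          intro hd
          have ihV := ih (by omega)
          have hpU : ((1, n - d) : ℕ × ℕ) ∈ Uminus n := mem_Uminus.mpr (by omega)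
          have hfib : ((1, n - d) : ℕ × ℕ) ∈ (Uminus n).filter
              (fun q => wIdx n q.2 = n - d) := by
            rw [Finset.mem_filter]
            refine ⟨hpU, ?_⟩
            show wIdx n (n - d) = n - d
            unfold wIdx
            split <;> omega
          apply hsat (n - (d + 1)) (by omega) (by omega) (1, n - d) (ihV hfib)
          unfold ind eInd wIdx
          dsimp only
          split_ifs <;> omega
      -- conclude V = Uminus n, hence U₀ = ∅
      have hVfull : Uminus n ⊆ V := by
        intro p hp
        have hk := phi_mem hp
        rw [Finset.mem_Icc] at hk
        have : p ∈ (Uminus n).filter (fun q => wIdx n q.2 = wIdx n p.2) :=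
          Finset.mem_filter.mpr ⟨hp, rfl⟩
        have := S2 (n - wIdx n p.2) (by omega)
        apply this
        rw [Finset.mem_filter]
        exact ⟨hp, by omega⟩
      rw [Finset.eq_empty_iff_forall_notMem]
      intro p hp
      have := hVfull (hU₀ hp)
      rw [hVdef, Finset.mem_sdiff] at this
      exact this.2 hp
  · -- converse : both extremes give equality
    rintro (rfl | rfl)
    · simp only [Finset.sum_empty, Finset.card_empty, Nat.cast_zero, zero_add]
      rw [Finset.sum_eq_zero, ]
      intro k hk
      rw [Finset.mem_Icc] at hk
      have hk1 : (1 : ℤ) ≤ k := by exact_mod_cast hk.1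
      have hkn : (k : ℤ) ≤ n := by exact_mod_cast hk.2
      have : (k : ℤ) ^ 2 - 2 * k * n ≤ 0 := by nlinarith
      simpa [max_eq_left] using this
    · have hterm : ∀ k ∈ Finset.Icc 1 n,
          max 0 ((∑ p ∈ Uminus n, eInd n k p) + (k : ℤ) ^ 2 - 2 * k * n) =
            (2 * k - 1 : ℤ) := by
        intro k hk
        rw [Finset.mem_Icc] at hk
        rw [sumE hn k hk.1 hk.2]
        have hk1 : (1 : ℤ) ≤ k := by exact_mod_cast hk.1
        rw [max_eq_right (by linarith)]
        ring
      rw [Finset.sum_congr rfl hterm]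
      have hcardU : (Uminus n).card = ∑ k ∈ Finset.Icc 1 n,
          ((Uminus n).filter (fun p => wIdx n p.2 = k)).card :=
        Finset.card_eq_sum_card_fiberwise fun p hp => phi_mem hp
      rw [hcardU, Nat.cast_sum]
      apply Finset.sum_congr rfl
      intro k hk
      rw [Finset.mem_Icc] at hk
      rw [fiberCard hk.1 hk.2]
      omega
end

section
/- Let $J$ be a topological abelian group containing a finite-index open subgroup $M$ isomorphic to $\mathbb{Z}_2^n$. Then $\#(J/2J) = 2^n \cdot \#J[2]$. -/
private def dbl (A : Type*) [AddCommGroup A] : A →+ A := 2 • AddMonoidHom.id A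

private lemma dbl_apply {A : Type*} [AddCommGroup A] (a : A) : dbl A a = a + a := by
  simp [dbl, two_smul]

/-- transport of the doubling cokernel along an isomorphism -/
private lemma card_quot_congr {A B : Type*} [AddCommGroup A] [AddCommGroup B] (e : A ≃+ B) :
    Nat.card (A ⧸ (dbl A).range) = Nat.card (B ⧸ (dbl B).range) := by
  refine Nat.card_congr (QuotientAddGroup.congr _ _ e ?_).toEquiv
  ext b
  constructor
  · rintro ⟨x, ⟨a, rfl⟩, rfl⟩
    exact ⟨e a, by simp [dbl_apply, map_add]⟩
  · rintro ⟨a, rfl⟩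
    exact ⟨dbl A (e.symm a), ⟨e.symm a, rfl⟩, by simp [dbl_apply, map_add]⟩

private lemma card_padic (n : ℕ) :
    Nat.card ((Fin n → ℤ_[2]) ⧸ (dbl (Fin n → ℤ_[2])).range) = 2 ^ n := by
  set φ : (Fin n → ℤ_[2]) →+ (Fin n → ZMod 2) :=
    AddMonoidHom.mk' (fun x i => PadicInt.toZMod (x i))
      (by intro x y; funext i; simp) with hφ
  have hsurj : Function.Surjective φ := by
    intro y
    refine ⟨fun i => ((y i).val : ℤ_[2]), funext fun i => ?_⟩
    simp [hφ, map_natCast]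
  have hker : φ.ker = (dbl (Fin n → ℤ_[2])).range := by
    ext x
    constructor
    · intro hx
      have hx' : ∀ i, PadicInt.toZMod (x i) = 0 := fun i => congrFun hx i
      have hdvd : ∀ i, (2 : ℤ_[2]) ∣ x i := by
        intro i
        have : x i ∈ RingHom.ker (PadicInt.toZMod (p := 2)) := hx' i
        rw [PadicInt.ker_toZMod, PadicInt.maximalIdeal_eq_span_p,
          Ideal.mem_span_singleton] at this
        exact_mod_cast this
      choose y hy using hdvd
      refine ⟨y, funext fun i => ?_⟩
      simp [dbl_apply, hy i, two_mul]
    · rintro ⟨a, rfl⟩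
      funext i
      have : PadicInt.toZMod (a i + a i) = 0 := by
        rw [← two_mul, map_mul]
        have : (PadicInt.toZMod (2 : ℤ_[2]) : ZMod 2) = 0 := by
          rw [show ((2 : ℤ_[2])) = ((2 : ℕ) : ℤ_[2]) by norm_num, map_natCast]
          decide
        rw [this, zero_mul]
      simpa [dbl_apply, hφ] using this
  rw [← hker]
  have := Nat.card_congr (QuotientAddGroup.quotientKerEquivOfSurjective φ hsurj).toEquiv
  rw [this, Nat.card_pi]
  simp [Nat.card_eq_fintype_card]

/-- If a topological abelian group `J` contains an open finite-index subgroup `M`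
topologically isomorphic to `ℤ₂ⁿ`, then `#(J/2J) = 2ⁿ · #J[2]`. -/
theorem stmt11 (n : ℕ)
    (J : Type*) [AddCommGroup J] [TopologicalSpace J] [IsTopologicalAddGroup J]
    (M : AddSubgroup J) (hopen : IsOpen (M : Set J)) [M.FiniteIndex]
    (e : M ≃+ (Fin n → ℤ_[2])) (he : Continuous e) (he' : Continuous e.symm) :
    Nat.card (J ⧸ (2 • AddMonoidHom.id J).range) = 2 ^ n * Nat.card {x : J // x + x = 0} := by
  classical
  set f := dbl J with hf
  set T := f.range with hT
  set M2 := M.map f with hM2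
  set K := f.ker with hK
  set N := K ⊔ M with hN
  -- torsion-freeness of M
  have hpad : ∀ (y : Fin n → ℤ_[2]), y + y = 0 → y = 0 := by
    intro y hy; funext i
    have h2 : (2 : ℤ_[2]) * y i = 0 := by rw [two_mul]; exact congrFun hy i
    rcases mul_eq_zero.mp h2 with h | h
    · exact absurd h two_ne_zero
    · exact h
  have htf : ∀ x : J, x ∈ M → x + x = 0 → x = 0 := by
    intro x hxM hx
    have hm : (⟨x, hxM⟩ : M) + ⟨x, hxM⟩ = 0 := by ext; simpa using hx
    have hz : e ⟨x, hxM⟩ = 0 := hpad _ (by rw [← map_add, hm, map_zero])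
    have : (⟨x, hxM⟩ : M) = 0 := by apply e.injective; simpa using hz
    simpa using congrArg Subtype.val this
  have h1 : M2 ≤ T := by rintro _ ⟨m, hm, rfl⟩; exact ⟨m, rfl⟩
  have h2 : M2 ≤ M := by
    rintro _ ⟨m, hm, rfl⟩
    rw [dbl_apply]; exact add_mem hm hm
  have h3 : M ≤ N := le_sup_right
  have eq1 : M2.relIndex T * T.index = M2.index := AddSubgroup.relIndex_mul_index h1
  have eq2 : M2.relIndex M * M.index = M2.index := AddSubgroup.relIndex_mul_index h2
  have eq5 : M.relIndex N * N.index = M.index := AddSubgroup.relIndex_mul_index h3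
  -- eq3 : [M : 2M] = 2 ^ n
  have hsub : M2.addSubgroupOf M = (dbl M).range := by
    ext x
    constructor
    · rintro ⟨m, hm, hmx⟩
      refine ⟨⟨m, hm⟩, ?_⟩
      ext
      rw [dbl_apply] at hmx ⊢
      simpa using hmx
    · rintro ⟨m, rfl⟩
      exact ⟨(m : J), m.2, by rw [dbl_apply, dbl_apply]; simp⟩
  have eq3 : M2.relIndex M = 2 ^ n := by
    show (M2.addSubgroupOf M).index = 2 ^ n
    rw [hsub]
    show Nat.card (M ⧸ (dbl M).range) = 2 ^ n
    rw [card_quot_congr e, card_padic]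
  -- eq4 : [2J : 2M] = [J : N]
  have eq4 : M2.relIndex T = N.index := by
    set g : J →+ T ⧸ (M2.addSubgroupOf T) :=
      (QuotientAddGroup.mk' (M2.addSubgroupOf T)).comp f.rangeRestrict with hg
    have hgsurj : Function.Surjective g :=
      (QuotientAddGroup.mk'_surjective _).comp f.rangeRestrict_surjective
    have hgker : g.ker = N := by
      ext x
      have hmem : x ∈ g.ker ↔ f x ∈ M2 := by
        rw [AddMonoidHom.mem_ker, hg, AddMonoidHom.comp_apply,
          QuotientAddGroup.mk'_apply, QuotientAddGroup.eq_zero_iff]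
        rfl
      rw [hmem, hN, AddSubgroup.mem_sup]
      constructor
      · rintro ⟨m, hm, hmx⟩
        refine ⟨x - m, ?_, m, hm, by abel⟩
        show f (x - m) = 0
        rw [map_sub, hmx, sub_self]
      · rintro ⟨k, hk, m, hm, rfl⟩
        refine ⟨m, hm, ?_⟩
        have hk0 : f k = 0 := hk
        rw [map_add, hk0, zero_add]
    have : Nat.card (T ⧸ (M2.addSubgroupOf T)) = Nat.card (J ⧸ g.ker) :=
      (Nat.card_congr (QuotientAddGroup.quotientKerEquivOfSurjective g hgsurj).toEquiv).symm
    show (M2.addSubgroupOf T).index = N.index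
    rw [show (M2.addSubgroupOf T).index = Nat.card (T ⧸ (M2.addSubgroupOf T)) from rfl,
      this, hgker]
    rfl
  -- eq6 : [N : M] = #K
  have hbot : M.addSubgroupOf K = ⊥ := by
    rw [eq_bot_iff]
    rintro ⟨x, hxK⟩ hxM
    have hx0 : x + x = 0 := by
      have h := hxK
      rw [hK, AddMonoidHom.mem_ker, hf, dbl_apply] at h
      exact h
    exact AddSubgroup.mem_bot.mpr (Subtype.ext (htf x hxM hx0))
  have eq6 : M.relIndex N = Nat.card K := by
    show (M.addSubgroupOf N).index = Nat.card K
    rw [show (M.addSubgroupOf N).index = Nat.card (N ⧸ (M.addSubgroupOf N)) from rfl]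
    have e2 := QuotientAddGroup.quotientInfEquivSumNormalQuotient K M
    rw [← Nat.card_congr e2.toEquiv, hbot,
      Nat.card_congr (QuotientAddGroup.quotientBot (G := K)).toEquiv]
  -- finiteness
  have hMfin : M.index ≠ 0 := AddSubgroup.FiniteIndex.index_ne_zero
  have hNfin : N.index ≠ 0 := fun h0 => hMfin (by
    have := AddSubgroup.index_dvd_of_le h3
    rw [h0] at this
    exact Nat.eq_zero_of_zero_dvd this)
  -- combine
  have kA : N.index * T.index = M2.index := by rw [← eq4]; exact eq1
  have kB : 2 ^ n * M.index = M2.index := by rw [← eq2, eq3]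
  have kC : Nat.card K * N.index = M.index := by rw [← eq5, eq6]
  have key : N.index * T.index = N.index * (2 ^ n * Nat.card K) := by
    rw [kA, ← kB, ← kC]; ring
  have hfinal : T.index = 2 ^ n * Nat.card K := Nat.eq_of_mul_eq_mul_left (Nat.pos_of_ne_zero hNfin) key
  have hKcard : Nat.card K = Nat.card {x : J // x + x = 0} := by
    refine Nat.card_congr (Equiv.subtypeEquivRight fun x => ?_)
    show f x = 0 ↔ x + x = 0
    rw [dbl_apply]
  show T.index = 2 ^ n * Nat.card {x : J // x + x = 0}
  rw [hfinal, hKcard]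
end

section
/- Let $k$ be a separably closed field with $\mathrm{char}(k) \neq 2$, let $W$ be a non-degenerate split quadratic space over $k$ of dimension $2n+1$, and let $f(x)$ be a monic separable polynomial of degree $2n+1$. If $T, T': W \to W$ are both self-adjoint with characteristic polynomial $f(x)$, then there exists $g \in \mathrm{SO}(W)(k)$ with $T' = gTg^{-1}$. Moreover, the stabilizer of $T$ in $\mathrm{SO}(W)(k)$ is an elementary abelian $2$-group of order $2^{2n}$. -/
set_option linter.unusedSectionVars false
open Polynomial Module


section Aux

variable {k W : Type*} [Field k] [AddCommGroup W] [Module k W]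

/-- Every root of the characteristic polynomial is an eigenvalue. -/
lemma aux_eig [FiniteDimensional k W] (T : W →ₗ[k] W) {μ : k}
    (h : T.charpoly.eval μ = 0) : ∃ v : W, v ≠ 0 ∧ T v = μ • v := by
  classical
  let b := Module.finBasis k W
  have hdet : LinearMap.det (μ • (LinearMap.id : W →ₗ[k] W) - T) = 0 := by
    rw [← LinearMap.det_toMatrix b]
    have hM : (LinearMap.toMatrix b b) (μ • LinearMap.id - T) =
        Matrix.diagonal (fun _ => μ) - LinearMap.toMatrix b b T := by
      rw [map_sub, map_smul, LinearMap.toMatrix_id]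
      congr 1
      ext i j
      by_cases hij : i = j <;>
        simp [Matrix.diagonal, Matrix.one_apply, hij]
    rw [hM]
    have key : (LinearMap.toMatrix b b T).charpoly.eval μ =
        (Matrix.diagonal (fun _ => μ) - LinearMap.toMatrix b b T).det := by
      rw [Matrix.charpoly, ← Polynomial.coe_evalRingHom, RingHom.map_det]
      congr 1
      ext i j
      by_cases hij : i = j <;>
        simp [Matrix.charmatrix_apply, hij, Matrix.diagonal, Matrix.one_apply]
    rw [← key, LinearMap.charpoly_toMatrix, h]
  obtain ⟨v, hvmem, hv0⟩ := SetLike.exists_of_lt (LinearMap.bot_lt_ker_of_det_eq_zero hdet)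
  refine ⟨v, by simpa using hv0, ?_⟩
  have hv := LinearMap.mem_ker.mp hvmem
  have : μ • v - T v = 0 := by simpa using hv
  linear_combination (norm := module) -this

end Aux
section AuxBasis


variable {k W : Type*} [Field k] [IsSepClosed k] [AddCommGroup W] [Module k W]
  [FiniteDimensional k W]

/-- Existence of a `B`-orthonormal eigenbasis for a self-adjoint operator with
separable split characteristic polynomial. -/
lemma aux_basis [DecidableEq k] (hchar : (2 : k) ≠ 0) (n : ℕ) (hdim : Module.finrank k W = 2 * n + 1)
    (B : LinearMap.BilinForm k W) (hnd : B.Nondegenerate)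
    (f : Polynomial k) (hmonic : f.Monic) (hsep : f.Separable)
    (hfdeg : f.natDegree = 2 * n + 1)
    (S : W →ₗ[k] W) (hS : ∀ v w, B (S v) w = B v (S w)) (hcp : S.charpoly = f) :
    ∃ b : Basis { x // x ∈ f.roots.toFinset } k W,
      (∀ i, S (b i) = (i : k) • b i) ∧
      (∀ i j, B (b i) (b j) = if i = j then 1 else 0) := by
  classical
  have hf0 : f ≠ 0 := hmonic.ne_zero
  have hsplits : f.Splits := IsSepClosed.splits_of_separable f hsep
  have hnodup : f.roots.Nodup := Polynomial.nodup_roots hsep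
  have hcard : Fintype.card { x // x ∈ f.roots.toFinset } = 2 * n + 1 := by
    rw [Fintype.card_coe, Multiset.toFinset_card_of_nodup hnodup,
      Polynomial.splits_iff_card_roots.mp hsplits, hfdeg]
  have hne : Nonempty { x // x ∈ f.roots.toFinset } := by
    rw [← Fintype.card_pos_iff, hcard]; omega
  -- eigenvectors
  have hv : ∀ i : { x // x ∈ f.roots.toFinset }, ∃ v : W, v ≠ 0 ∧ S v = (i : k) • v := by
    intro i
    apply aux_eig
    rw [hcp]
    exact Polynomial.isRoot_of_mem_roots (Multiset.mem_toFinset.mp i.2)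
  choose v hv0 hveig using hv
  have hli : LinearIndependent k v := by
    apply Module.End.eigenvectors_linearIndependent' S (fun i : { x // x ∈ f.roots.toFinset } => (i : k))
      Subtype.coe_injective
    intro i
    exact ⟨Module.End.mem_eigenspace_iff.mpr (hveig i), hv0 i⟩
  let b₀ := basisOfLinearIndependentOfCardEqFinrank hli (by rw [hcard, hdim])
  have hb₀ : ∀ i, b₀ i = v i := fun i =>
    congrFun (coe_basisOfLinearIndependentOfCardEqFinrank hli _) i
  -- orthogonality
  have horth : ∀ i j : { x // x ∈ f.roots.toFinset }, i ≠ j → B (v i) (v j) = 0 := by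
    intro i j hij
    have h1 : (i : k) * B (v i) (v j) = (j : k) * B (v i) (v j) := by
      calc (i : k) * B (v i) (v j) = B ((i : k) • v i) (v j) := by
            rw [map_smul]; rfl
        _ = B (S (v i)) (v j) := by rw [hveig]
        _ = B (v i) (S (v j)) := hS _ _
        _ = B (v i) ((j : k) • v j) := by rw [hveig]
        _ = (j : k) * B (v i) (v j) := by rw [map_smul]; rfl
    have hij' : (i : k) ≠ (j : k) := fun h => hij (Subtype.coe_injective h)
    by_contra hB
    exact hij' (mul_right_cancel₀ hB h1)
  -- diagonal entries nonzero
  have hc : ∀ i, B (v i) (v i) ≠ 0 := by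
    intro i hzero
    apply hv0 i
    apply hnd.1
    intro w
    rw [← b₀.sum_repr w, map_sum]
    refine Finset.sum_eq_zero fun j _ => ?_
    rw [map_smul, hb₀]
    by_cases hij : i = j
    · rw [← hij, hzero, smul_zero]
    · rw [horth i j hij, smul_zero]
  -- square roots
  haveI : NeZero (2 : k) := ⟨hchar⟩
  have hs : ∀ i : { x // x ∈ f.roots.toFinset }, ∃ z : k, z ^ 2 = B (v i) (v i) := fun i =>
    IsSepClosed.exists_pow_nat_eq (B (v i) (v i)) 2
  choose s hs2 using hs
  have hs0 : ∀ i, s i ≠ 0 := by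
    intro i h
    apply hc i
    rw [← hs2, h]; ring
  -- normalized basis
  let u : { x // x ∈ f.roots.toFinset } → kˣ := fun i => (Units.mk0 (s i) (hs0 i))⁻¹
  refine ⟨b₀.unitsSMul u, fun i => ?_, fun i j => ?_⟩
  · rw [Basis.unitsSMul_apply, Units.smul_def, map_smul, hb₀, hveig, smul_comm]
  · rw [Basis.unitsSMul_apply, Basis.unitsSMul_apply, Units.smul_def, Units.smul_def, map_smul, map_smul, hb₀, hb₀]
    by_cases hij : i = j
    · subst hij
      simp only [if_pos rfl, u]
      show (s i)⁻¹ • ((s i)⁻¹ • B (v i) (v i)) = 1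
      rw [smul_eq_mul, smul_eq_mul, ← hs2]
      field_simp
      rw [div_self (hs0 i)]
    · rw [LinearMap.smul_apply, horth i j hij, smul_zero, smul_zero, if_neg hij]
end AuxBasis
section AuxLin
variable {k W ι : Type*} [Field k] [AddCommGroup W] [Module k W] [Fintype ι] [DecidableEq ι] [FiniteDimensional k W]



/-- Coordinates of an eigenvector w.r.t. an eigenbasis vanish away from its eigenvalue. -/
lemma aux_coord (b : Basis ι k W) (S : W →ₗ[k] W) (d : ι → k)
    (hb : ∀ i, S (b i) = d i • b i) {w : W} {μ : k} (hw : S w = μ • w)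
    {j : ι} (hj : d j ≠ μ) : b.repr w j = 0 := by
  classical
  have h1 : S w = ∑ i, (d i * b.repr w i) • b i := by
    conv_lhs => rw [← b.sum_repr w, map_sum]
    refine Finset.sum_congr rfl fun i _ => ?_
    rw [map_smul, hb, smul_smul, mul_comm]
  have h2 : S w = ∑ i, (μ * b.repr w i) • b i := by
    rw [hw]
    conv_lhs => rw [← b.sum_repr w, Finset.smul_sum]
    refine Finset.sum_congr rfl fun i _ => ?_
    rw [smul_smul]
  have h3 : ∑ i, ((d i - μ) * b.repr w i) • b i = 0 := by
    have := h1.symm.trans h2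
    calc ∑ i, ((d i - μ) * b.repr w i) • b i
        = ∑ i, ((d i * b.repr w i) • b i - (μ * b.repr w i) • b i) := by
          refine Finset.sum_congr rfl fun i _ => ?_
          rw [← sub_smul, sub_mul]
      _ = 0 := by rw [Finset.sum_sub_distrib, this, sub_self]
  have h4 := Fintype.linearIndependent_iff.mp b.linearIndependent _ h3 j
  have h5 : d j - μ ≠ 0 := sub_ne_zero.mpr hj
  exact (mul_eq_zero.mp h4).resolve_left h5

lemma aux_presB (b : Basis ι k W) (B : LinearMap.BilinForm k W) (g : W →ₗ[k] W)
    (h : ∀ i j, B (g (b i)) (g (b j)) = B (b i) (b j)) : ∀ v w, B (g v) (g w) = B v w := by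
  have key : B.compl₁₂ g g = B :=
    b.ext fun i => b.ext fun j => by
      rw [LinearMap.compl₁₂_apply]; exact h i j
  intro v w
  rw [← LinearMap.compl₁₂_apply, key]

lemma aux_comm (b : Basis ι k W) (S₁ S₂ g : W →ₗ[k] W)
    (h : ∀ i, g (S₁ (b i)) = S₂ (g (b i))) : ∀ v, g (S₁ v) = S₂ (g v) := by
  have key : g.comp S₁ = S₂.comp g := b.ext fun i => by
    simp only [LinearMap.comp_apply]; exact h i
  intro v
  exact congrFun (congrArg (fun (f : W →ₗ[k] W) => ⇑f) key) v

lemma aux_det_diag (b : Basis ι k W) (g : W →ₗ[k] W) (ε : ι → k)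
    (h : ∀ i, g (b i) = ε i • b i) : LinearMap.det g = ∏ i, ε i := by
  rw [← LinearMap.det_toMatrix b]
  have key : LinearMap.toMatrix b b g = Matrix.diagonal ε := by
    ext i j
    rw [LinearMap.toMatrix_apply, h j, map_smul]
    simp only [Basis.repr_self, Finsupp.smul_single, smul_eq_mul, mul_one, Finsupp.single_apply,
      Matrix.diagonal_apply]
    rcases eq_or_ne i j with rfl | hij
    · simp
    · simp [hij, Ne.symm hij]
  rw [key, Matrix.det_diagonal]

lemma aux_det_sq (b : Basis ι k W) (B : LinearMap.BilinForm k W)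
    (hb : ∀ i j, B (b i) (b j) = if i = j then 1 else 0)
    (g : W →ₗ[k] W) (h : ∀ i j, B (g (b i)) (g (b j)) = B (b i) (b j)) :
    LinearMap.det g * LinearMap.det g = 1 := by
  set M := LinearMap.toMatrix b b g with hM
  have hrep : ∀ i, g (b i) = ∑ l, M l i • b l := by
    intro i
    conv_lhs => rw [← b.sum_repr (g (b i))]
    refine Finset.sum_congr rfl fun l _ => ?_
    rw [hM, LinearMap.toMatrix_apply]
  have key : M.transpose * M = 1 := by
    ext i j
    have h1 : B (g (b i)) (g (b j)) = ∑ l, M l i * M l j := by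
      rw [hrep i, hrep j]
      simp only [map_sum, map_smul, LinearMap.coe_sum, Finset.sum_apply,
        LinearMap.smul_apply, hb, smul_eq_mul, mul_ite, mul_one, mul_zero,
        Finset.sum_ite_eq, Finset.sum_ite_eq', Finset.mem_univ, if_true]
      exact Finset.sum_congr rfl fun l _ => mul_comm _ _
    rw [Matrix.mul_apply]
    have h2 : (1 : Matrix ι ι k) i j = if i = j then 1 else 0 := by
      simp [Matrix.one_apply]
    rw [h2, ← hb i j, ← h i j, h1]
    refine Finset.sum_congr rfl fun l _ => ?_
    rw [Matrix.transpose_apply]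
  have hdet := congrArg Matrix.det key
  rw [Matrix.det_mul, Matrix.det_transpose, Matrix.det_one] at hdet
  rw [← LinearMap.det_toMatrix b, ← hM]
  exact hdet

lemma aux_stab_diag (b : Basis ι k W) (S : W →ₗ[k] W) (d : ι → k) (hd : Function.Injective d)
    (hb : ∀ i, S (b i) = d i • b i) (g : W →ₗ[k] W) (hcomm : ∀ v, g (S v) = S (g v)) :
    ∀ i, g (b i) = (b.repr (g (b i)) i) • b i := by
  intro i
  have heig : S (g (b i)) = d i • g (b i) := by rw [← hcomm, hb, map_smul]
  have hz : ∀ j, j ≠ i → b.repr (g (b i)) j = 0 := fun j hj =>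
    aux_coord b S d hb heig (fun hh => hj (hd hh))
  conv_lhs => rw [← b.sum_repr (g (b i))]
  rw [Finset.sum_eq_single i (fun j _ hj => by rw [hz j hj, zero_smul]) (by simp)]

lemma aux_equiv_refl (b : Basis ι k W) :
    LinearMap.det ((b.equiv b (Equiv.refl ι) : W ≃ₗ[k] W) : W →ₗ[k] W) = 1 := by
  have : b.equiv b (Equiv.refl ι) = LinearEquiv.refl k W := by
    apply LinearEquiv.toLinearMap_injective
    apply b.ext; intro i
    simp [Basis.equiv_apply]
  rw [this]
  simp

/-- Properties of the map sending an orthonormal eigenbasis to a scaled orthonormal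
eigenbasis. -/
lemma aux_mk (b b' : Basis ι k W) (B : LinearMap.BilinForm k W)
    (T T' : W →ₗ[k] W) (d : ι → k)
    (hbT : ∀ i, T (b i) = d i • b i) (hbT' : ∀ i, T' (b' i) = d i • b' i)
    (hbB : ∀ i j, B (b i) (b j) = if i = j then 1 else 0)
    (hbB' : ∀ i j, B (b' i) (b' j) = if i = j then 1 else 0)
    (u : ι → kˣ) (hu : ∀ i, (u i : k) * (u i : k) = 1) :
    (∀ i, (b.equiv (b'.unitsSMul u) (Equiv.refl ι)) (b i) = (u i : k) • b' i) ∧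
    (∀ v w, B ((b.equiv (b'.unitsSMul u) (Equiv.refl ι)) v)
        ((b.equiv (b'.unitsSMul u) (Equiv.refl ι)) w) = B v w) ∧
    (∀ v, (b.equiv (b'.unitsSMul u) (Equiv.refl ι)) (T v) =
        T' ((b.equiv (b'.unitsSMul u) (Equiv.refl ι)) v)) ∧
    LinearMap.det ((b.equiv (b'.unitsSMul u) (Equiv.refl ι) : W ≃ₗ[k] W) : W →ₗ[k] W) =
      (∏ i, (u i : k)) *
        LinearMap.det ((b.equiv b' (Equiv.refl ι) : W ≃ₗ[k] W) : W →ₗ[k] W) := by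
  set g := b.equiv (b'.unitsSMul u) (Equiv.refl ι) with hg
  have hga : ∀ i, g (b i) = (u i : k) • b' i := by
    intro i
    rw [hg, Basis.equiv_apply, Equiv.refl_apply, Basis.unitsSMul_apply, Units.smul_def]
  refine ⟨hga, ?_, ?_, ?_⟩
  · refine aux_presB b B (g : W →ₗ[k] W) fun i j => ?_
    simp only [LinearEquiv.coe_coe]
    rw [hga i, hga j]
    simp only [map_smul, LinearMap.smul_apply, smul_eq_mul]
    rw [hbB, hbB']
    rcases eq_or_ne i j with rfl | hij
    · rw [if_pos rfl, mul_one, hu i]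
    · rw [if_neg hij, mul_zero, mul_zero]
  · refine aux_comm b T T' (g : W →ₗ[k] W) fun i => ?_
    simp only [LinearEquiv.coe_coe]
    rw [hbT i, map_smul, hga i, map_smul, hbT' i, smul_smul, smul_smul, mul_comm]
  · have hcomp : g = (b.equiv b' (Equiv.refl ι)).trans
        (b'.equiv (b'.unitsSMul u) (Equiv.refl ι)) := by
      apply LinearEquiv.toLinearMap_injective
      apply b.ext; intro i
      simp only [LinearEquiv.coe_coe, LinearEquiv.trans_apply, Basis.equiv_apply,
        Equiv.refl_apply, LinearMap.coe_comp, Function.comp_apply]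
      rw [hga i, Basis.unitsSMul_apply, Units.smul_def]
    have hdiag : LinearMap.det
        ((b'.equiv (b'.unitsSMul u) (Equiv.refl ι) : W ≃ₗ[k] W) : W →ₗ[k] W) =
        ∏ i, (u i : k) := by
      refine aux_det_diag b' _ (fun i => (u i : k)) fun i => ?_
      simp only [LinearEquiv.coe_coe]
      rw [Basis.equiv_apply, Equiv.refl_apply, Basis.unitsSMul_apply, Units.smul_def]
    rw [hcomp]
    have : ((((b.equiv b' (Equiv.refl ι)).trans
        (b'.equiv (b'.unitsSMul u) (Equiv.refl ι))) : W ≃ₗ[k] W) : W →ₗ[k] W) =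
        ((b'.equiv (b'.unitsSMul u) (Equiv.refl ι) : W ≃ₗ[k] W) : W →ₗ[k] W).comp
          ((b.equiv b' (Equiv.refl ι) : W ≃ₗ[k] W) : W →ₗ[k] W) := rfl
    rw [this, LinearMap.det_comp, hdiag]
end AuxLin
/-- Over a separably closed field `k` with `char k ≠ 2`, the group `SO(W)(k)` of a
split non-degenerate quadratic space `W` of dimension `2n+1` acts transitively on
self-adjoint operators with a fixed separable characteristic polynomial, and the
stabilizer of such an operator is an elementary abelian 2-group of order `2^{2n}`. -/
theorem stmt13 (n : ℕ) (k : Type*) [Field k] [IsSepClosed k] (hchar : (2 : k) ≠ 0)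
    (W : Type*) [AddCommGroup W] [Module k W] [FiniteDimensional k W]
    (hdim : Module.finrank k W = 2 * n + 1)
    (B : LinearMap.BilinForm k W) (hsymm : B.IsSymm) (hnd : B.Nondegenerate)
    (hsplit : ∃ X : Submodule k W, Module.finrank k X = n ∧ ∀ x ∈ X, ∀ y ∈ X, B x y = 0)
    (f : Polynomial k) (hmonic : f.Monic) (hsep : f.Separable)
    (hfdeg : f.natDegree = 2 * n + 1)
    (T T' : W →ₗ[k] W)
    (hT : ∀ v w, B (T v) w = B v (T w)) (hT' : ∀ v w, B (T' v) w = B v (T' w))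
    (hcp : T.charpoly = f) (hcp' : T'.charpoly = f) :
    (∃ g : W ≃ₗ[k] W, (∀ v w, B (g v) (g w) = B v w) ∧
        LinearMap.det (g : W →ₗ[k] W) = 1 ∧ ∀ v, T' v = g (T (g.symm v))) ∧
    (Nat.card {g : W ≃ₗ[k] W // (∀ v w, B (g v) (g w) = B v w) ∧
        LinearMap.det (g : W →ₗ[k] W) = 1 ∧ ∀ v, g (T v) = T (g v)} = 2 ^ (2 * n)) ∧
    (∀ g : W ≃ₗ[k] W, (∀ v w, B (g v) (g w) = B v w) →
        LinearMap.det (g : W →ₗ[k] W) = 1 → (∀ v, g (T v) = T (g v)) →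
        ∀ v, g (g v) = v) := by
  classical
  obtain ⟨b, hbT, hbB⟩ := aux_basis hchar n hdim B hnd f hmonic hsep hfdeg T hT hcp
  obtain ⟨b', hbT', hbB'⟩ := aux_basis hchar n hdim B hnd f hmonic hsep hfdeg T' hT' hcp'
  have hnodup : f.roots.Nodup := Polynomial.nodup_roots hsep
  have hsplits : f.Splits := IsSepClosed.splits_of_separable f hsep
  have hcard : Fintype.card { x // x ∈ f.roots.toFinset } = 2 * n + 1 := by
    rw [Fintype.card_coe, Multiset.toFinset_card_of_nodup hnodup,
      Polynomial.splits_iff_card_roots.mp hsplits, hfdeg]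
  have hne : Nonempty { x // x ∈ f.roots.toFinset } := by
    rw [← Fintype.card_pos_iff, hcard]; omega
  obtain ⟨i₀⟩ := hne
  have hd : Function.Injective (fun i : { x // x ∈ f.roots.toFinset } => (i : k)) :=
    Subtype.coe_injective
  have h1neg : (1 : k) ≠ -1 := by
    intro h
    apply hchar
    linear_combination h
  -- the key diagonalization data for stabilizer elements
  have stab_eps : ∀ g : W ≃ₗ[k] W, (∀ v w, B (g v) (g w) = B v w) →
      (∀ v, g (T v) = T (g v)) →
      ∃ ε : { x // x ∈ f.roots.toFinset } → k,
        (∀ i, g (b i) = ε i • b i) ∧ (∀ i, ε i * ε i = 1) := by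
    intro g hgB hgcomm
    have hdiag : ∀ i, g (b i) = (b.repr (g (b i)) i) • b i := by
      intro i
      exact aux_stab_diag b T _ hd hbT (g : W →ₗ[k] W) (fun v => hgcomm v) i
    refine ⟨fun i => b.repr (g (b i)) i, hdiag, fun i => ?_⟩
    have h := hgB (b i) (b i)
    rw [hdiag i] at h
    simp only [map_smul, LinearMap.smul_apply, smul_eq_mul] at h
    rw [hbB, if_pos rfl, mul_one] at h
    exact h
  refine ⟨?_, ?_, ?_⟩
  · -- transitivity
    set e0 := b.equiv b' (Equiv.refl _) with he0def
    have he0 : ∀ i, e0 (b i) = b' i := fun i => by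
      rw [he0def, Basis.equiv_apply, Equiv.refl_apply]
    have he0sq : LinearMap.det (e0 : W →ₗ[k] W) * LinearMap.det (e0 : W →ₗ[k] W) = 1 := by
      refine aux_det_sq b B hbB (e0 : W →ₗ[k] W) fun i j => ?_
      simp only [LinearEquiv.coe_coe]
      rw [he0 i, he0 j, hbB, hbB']
    have hd0 := mul_self_eq_one_iff.mp he0sq
    set u₁ : { x // x ∈ f.roots.toFinset } → kˣ := fun i =>
      if LinearMap.det (e0 : W →ₗ[k] W) = 1 then 1 else (if i = i₀ then -1 else 1) with hu₁def
    have hu₁ : ∀ i, (u₁ i : k) * (u₁ i : k) = 1 := by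
      intro i
      simp only [hu₁def]
      split_ifs <;> simp
    obtain ⟨hga, hgB, hgT, hgdet⟩ :=
      aux_mk b b' B T T' (fun i => (i : k)) hbT hbT' hbB hbB' u₁ hu₁
    refine ⟨b.equiv (b'.unitsSMul u₁) (Equiv.refl _), hgB, ?_, ?_⟩
    · rw [hgdet, ← he0def]
      have hprod : ∏ i, (u₁ i : k) =
          if LinearMap.det (e0 : W →ₗ[k] W) = 1 then 1 else -1 := by
        split_ifs with h
        · simp [hu₁def, h]
        · rw [Finset.prod_eq_single i₀
            (fun j _ hj => by rw [hu₁def]; simp [h, hj])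
            (fun hh => absurd (Finset.mem_univ i₀) hh)]
          rw [hu₁def]; simp [h]
      rcases hd0 with h | h
      · rw [hprod, if_pos h, h, one_mul]
      · rw [hprod, if_neg (fun hh => h1neg (h ▸ hh).symm), h]
        ring
    · intro v
      have := hgT ((b.equiv (b'.unitsSMul u₁) (Equiv.refl _)).symm v)
      rw [LinearEquiv.apply_symm_apply] at this
      exact this.symm
  · -- stabilizer count
    set J := { j : { x // x ∈ f.roots.toFinset } // j ≠ i₀ } with hJ
    set w : (J → Bool) → J → kˣ := fun c j => if c j then -1 else 1 with hw
    have hw2 : ∀ c j, w c j * w c j = 1 := by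
      intro c j; simp only [hw]; split_ifs <;> simp
    set uC : (J → Bool) → { x // x ∈ f.roots.toFinset } → kˣ := fun c i =>
      if h : i = i₀ then ∏ j : J, w c j else w c ⟨i, h⟩ with huC
    have huC2 : ∀ c i, uC c i * uC c i = 1 := by
      intro c i
      simp only [huC]
      split_ifs with h
      · rw [← Finset.prod_mul_distrib]
        exact Finset.prod_eq_one fun j _ => hw2 c j
      · exact hw2 c _
    have huCk : ∀ c i, (uC c i : k) * (uC c i : k) = 1 := by
      intro c i
      have := congrArg (Units.val) (huC2 c i)
      simpa using this
    have hprodC : ∀ c, ∏ i, (uC c i : k) = 1 := by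
      intro c
      have hu : ∏ i, uC c i = 1 := by
        rw [← Finset.mul_prod_erase Finset.univ (uC c) (Finset.mem_univ i₀)]
        have herase : ∏ i ∈ Finset.univ.erase i₀, uC c i = ∏ j : J, w c j := by
          rw [Finset.prod_subtype (Finset.univ.erase i₀)
            (p := fun i => i ≠ i₀) (fun x => by simp [Finset.mem_erase])]
          exact Finset.prod_congr rfl fun j _ => by simp only [huC]; rw [dif_neg j.2]
        rw [herase]
        simp only [huC]
        rw [dif_pos trivial, ← Finset.prod_mul_distrib]
        exact Finset.prod_eq_one fun j _ => hw2 c j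
      calc ∏ i, (uC c i : k) = ((∏ i, uC c i : kˣ) : k) :=
            (map_prod (Units.coeHom k) _ _).symm
        _ = 1 := by rw [hu]; simp
    have hΨprops : ∀ c : J → Bool,
        (∀ v w', B ((b.equiv (b.unitsSMul (uC c)) (Equiv.refl _)) v)
          ((b.equiv (b.unitsSMul (uC c)) (Equiv.refl _)) w') = B v w') ∧
        LinearMap.det ((b.equiv (b.unitsSMul (uC c)) (Equiv.refl _) : W ≃ₗ[k] W) : W →ₗ[k] W) = 1 ∧
        ∀ v, (b.equiv (b.unitsSMul (uC c)) (Equiv.refl _)) (T v) =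
          T ((b.equiv (b.unitsSMul (uC c)) (Equiv.refl _)) v) := by
      intro c
      obtain ⟨hga, hgB, hgT, hgdet⟩ :=
        aux_mk b b B T T (fun i => (i : k)) hbT hbT hbB hbB (uC c) (huCk c)
      exact ⟨hgB, by rw [hgdet, hprodC c, aux_equiv_refl, one_mul], hgT⟩
    set Ψ : (J → Bool) → {g : W ≃ₗ[k] W // (∀ v w, B (g v) (g w) = B v w) ∧
        LinearMap.det (g : W →ₗ[k] W) = 1 ∧ ∀ v, g (T v) = T (g v)} := fun c =>
      ⟨b.equiv (b.unitsSMul (uC c)) (Equiv.refl _),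
        (hΨprops c).1, (hΨprops c).2.1, (hΨprops c).2.2⟩ with hΨ
    have hΨapp : ∀ c i, (Ψ c : W ≃ₗ[k] W) (b i) = (uC c i : k) • b i := by
      intro c i
      rw [hΨ]
      show (b.equiv (b.unitsSMul (uC c)) (Equiv.refl _)) (b i) = _
      rw [Basis.equiv_apply, Equiv.refl_apply, Basis.unitsSMul_apply, Units.smul_def]
    have hwval : ∀ (c : J → Bool) (j : J), (w c j : k) = if c j then -1 else 1 := by
      intro c j
      simp only [hw]
      by_cases h : c j <;> simp [h]
    have hinj : Function.Injective Ψ := by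
      intro c c' h
      have heq : ∀ j : J, (uC c (j : _) : k) = (uC c' (j : _) : k) := by
        intro j
        have h1 := hΨapp c j
        have h2 := hΨapp c' j
        rw [h] at h1
        have h3 := h1.symm.trans h2
        have hb0 : b (j : _) ≠ 0 := b.ne_zero _
        by_contra hne'
        apply hb0
        have := sub_eq_zero.mpr h3
        rw [← sub_smul] at this
        exact (smul_eq_zero.mp this).resolve_left (sub_ne_zero.mpr hne')
      funext j
      have hj := heq j
      simp only [huC, dif_neg j.2, hw, Subtype.coe_eta, apply_ite (Units.val (α := k)),
        Units.val_neg, Units.val_one] at hj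
      by_cases hc : c j <;> by_cases hc' : c' j <;>
        simp only [hc, hc', if_true, if_false] at hj ⊢ <;>
        first
          | rfl
          | exact absurd hj h1neg
          | exact absurd hj (Ne.symm h1neg)
          | exact absurd hj.symm h1neg
          | exact absurd hj.symm (Ne.symm h1neg)
    have hsurj : Function.Surjective Ψ := by
      rintro ⟨g, hgB, hgdet, hgcomm⟩
      obtain ⟨ε, hdiag, hsq⟩ := stab_eps g hgB hgcomm
      have hpm : ∀ i, ε i = 1 ∨ ε i = -1 := fun i => mul_self_eq_one_iff.mp (hsq i)
      have hdet' : ∏ i, ε i = 1 := by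
        rw [← aux_det_diag b (g : W →ₗ[k] W) ε (fun i => hdiag i)]
        exact hgdet
      have hε0 : ε i₀ ≠ 0 := by
        intro h
        have := hsq i₀
        rw [h, mul_zero] at this
        exact one_ne_zero this.symm
      set c : J → Bool := fun j => if ε (j : _) = -1 then true else false with hc
      have hwc : ∀ j : J, (w c j : k) = ε (j : _) := by
        intro j
        rcases hpm (j : _) with h | h
        · have hcj : c j = false := by
            simp only [hc]
            rw [if_neg (fun hh => h1neg (h.symm.trans hh))]
          rw [hwval, hcj, h]
          simp
        · have hcj : c j = true := by
            simp only [hc]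
            rw [if_pos h]
          rw [hwval, hcj, h]
          simp
      refine ⟨c, ?_⟩
      apply Subtype.ext
      show (b.equiv (b.unitsSMul (uC c)) (Equiv.refl _)) = g
      apply LinearEquiv.toLinearMap_injective
      apply b.ext
      intro i
      simp only [LinearEquiv.coe_coe]
      have hL : (b.equiv (b.unitsSMul (uC c)) (Equiv.refl _)) (b i) = (uC c i : k) • b i := by
        rw [Basis.equiv_apply, Equiv.refl_apply, Basis.unitsSMul_apply, Units.smul_def]
      rw [hL, hdiag i]
      congr 1
      by_cases hi : i = i₀
      · simp only [huC]
        rw [dif_pos hi, hi]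
        have hval : ((∏ j : J, w c j : kˣ) : k) = ∏ j : J, (w c j : k) :=
          map_prod (Units.coeHom k) _ _
        rw [hval]
        have h1 : ∏ j : J, (w c j : k) = ∏ j : J, ε (j : _) :=
          Finset.prod_congr rfl fun j _ => hwc j
        have h2 : ∏ j : J, ε (j : _) = ∏ i ∈ Finset.univ.erase i₀, ε i := by
          rw [Finset.prod_subtype (Finset.univ.erase i₀)
            (p := fun i => i ≠ i₀) (fun x => by simp [Finset.mem_erase])]
        have h3 : ε i₀ * ∏ i ∈ Finset.univ.erase i₀, ε i = 1 :=
          (Finset.mul_prod_erase Finset.univ ε (Finset.mem_univ i₀)).trans hdet'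
        have h4 : ε i₀ * ∏ i ∈ Finset.univ.erase i₀, ε i = ε i₀ * ε i₀ := by
          rw [h3, hsq i₀]
        have h5 := mul_left_cancel₀ hε0 h4
        rw [h1, h2, h5]
      · simp only [huC]
        rw [dif_neg hi]
        exact hwc ⟨i, hi⟩
    refine ((Nat.card_eq_of_bijective Ψ ⟨hinj, hsurj⟩).symm).trans ?_
    rw [Nat.card_eq_fintype_card, Fintype.card_fun, Fintype.card_bool]
    congr 1
    have hJcard : Fintype.card J = 2 * n := by
      have h1 : Fintype.card J = Fintype.card { x // x ∈ f.roots.toFinset } -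
          Fintype.card {j : { x // x ∈ f.roots.toFinset } // j = i₀} := by
        convert Fintype.card_subtype_compl (fun j : { x // x ∈ f.roots.toFinset } => j = i₀)
      rw [h1, Fintype.card_subtype_eq, hcard]
      omega
    rw [hJcard]
  · -- involution
    intro g hgB hgdet hgcomm
    obtain ⟨ε, hdiag, hsq⟩ := stab_eps g hgB hgcomm
    have hcomp : ((g : W →ₗ[k] W).comp (g : W →ₗ[k] W)) = LinearMap.id := by
      apply b.ext
      intro i
      simp only [LinearMap.comp_apply, LinearEquiv.coe_coe, LinearMap.id_apply]
      rw [hdiag i, map_smul, hdiag i, smul_smul, hsq i, one_smul]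
    intro v
    have hv := congrArg (fun (F : W →ₗ[k] W) => F v) hcomp
    simpa using hv
end

section
/- Let $F(z) = a_0 z + (a_2/3) z^3 + (a_4/5) z^5 + \cdots$ be a power series with coefficients $a_{2i} \in \mathbb{Z}_3$ converging on $3\mathbb{Z}_3$, and suppose that $a_0$ or $a_2$ is a unit in $\mathbb{Z}_3$. Then $F$ has at most three zeroes in the disc $3\mathbb{Z}_3$. -/
open Finset IsUltrametricDist

local notation "K" => ℚ_[3]

private lemma stmt15_nat_norm_one {t : ℕ} (ht : ¬ ((3:ℕ) ∣ t)) : ‖(t : K)‖ = 1 := by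
  have h1 : ‖((t:ℤ) : K)‖ ≤ 1 := Padic.norm_int_le_one _
  have h2 : ¬ ‖((t:ℤ) : K)‖ < 1 := by
    rw [Padic.norm_intCast_lt_one_iff]
    exact_mod_cast ht
  push_cast at h1 h2
  exact le_antisymm h1 (not_lt.mp h2)

-- norm of 2j+5 in ℚ_[3] is at least 3 ^ -(2j+1)
private lemma stmt15_den_bound (j : ℕ) :
    (3:ℝ) ^ (-((2*j+1 : ℕ) : ℤ)) ≤ ‖((2*(j+2)+1 : ℕ) : K)‖ := by
  have hne : (2*(j+2)+1 : ℕ) ≠ 0 := by omega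
  have hval : ((2*(j+2)+1 : ℕ) : K).valuation = padicValNat 3 (2*(j+2)+1) := by
    exact_mod_cast Padic.valuation_natCast (p := 3) (2*(j+2)+1)
  have hnz : ((2*(j+2)+1 : ℕ) : K) ≠ 0 := by exact_mod_cast hne
  rw [Padic.norm_eq_zpow_neg_valuation hnz, hval]
  have hle : padicValNat 3 (2*(j+2)+1) ≤ 2*j+1 := by
    by_contra h
    push_neg at h
    have hdvd : 3 ^ padicValNat 3 (2*(j+2)+1) ∣ (2*(j+2)+1) := pow_padicValNat_dvd
    have h1 : 3 ^ padicValNat 3 (2*(j+2)+1) ≤ 2*(j+2)+1 := Nat.le_of_dvd (by omega) hdvd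
    have h2 : 3 ^ (2*j+2) ≤ 3 ^ padicValNat 3 (2*(j+2)+1) :=
      Nat.pow_le_pow_right (by norm_num) (by omega)
    have h3 : 2*(j+2)+1 < 3 ^ (2*j+2) := by
      have h4 : j < 2 ^ j := Nat.lt_two_pow_self
      have h5 : 2 ^ j ≤ 3 ^ j := Nat.pow_le_pow_left (by norm_num) j
      have : j + 1 ≤ 3 ^ j := by omega
      calc 2*(j+2)+1 = 2*j+5 := by ring
        _ < 9*(j+1) := by omega
        _ ≤ 9 * 3^j := by nlinarith
        _ ≤ 3 ^ (2*j+2) := by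
            rw [pow_add]
            have : (3:ℕ)^j ≤ 3^(2*j) := Nat.pow_le_pow_right (by norm_num) (by omega)
            nlinarith
    omega
  apply zpow_le_zpow_right₀ (by norm_num : (1:ℝ) ≤ 3)
  omega

private lemma stmt15_tail (f : ℕ → K) {B : ℝ} (hB : 0 ≤ B) (hf : HasSum f 0)
    (h : ∀ j, ‖f (j+2)‖ ≤ B) : ‖f 0 + f 1‖ ≤ B := by
  have h2 : HasSum (fun n => f (n+2)) (-(f 0 + f 1)) := by
    rw [hasSum_nat_add_iff 2]
    have : -(f 0 + f 1) + ∑ i ∈ range 2, f i = 0 := by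
      rw [Finset.sum_range_succ, Finset.sum_range_one]; ring
    rwa [this]
  have h3 : -(f 0 + f 1) = ∑' n, f (n+2) := h2.tsum_eq.symm
  have h4 : ‖∑' n, f (n+2)‖ ≤ B := norm_tsum_le_of_forall_le_of_nonneg hB h
  rw [← h3, norm_neg] at h4
  exact h4

private lemma stmt15_S_norm {x y : K} {r : ℝ} (hx : ‖x‖ ≤ r) (hy : ‖y‖ ≤ r) (n : ℕ) :
    ‖∑ a ∈ range (n+1), x^a * y^(n-a)‖ ≤ r^n := by
  have hr : 0 ≤ r := le_trans (norm_nonneg x) hx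
  apply norm_sum_le_of_forall_le_of_nonneg (pow_nonneg hr n)
  intro a ha
  have han : a ≤ n := Nat.lt_succ_iff.mp (Finset.mem_range.mp ha)
  calc ‖x^a * y^(n-a)‖ = ‖x‖^a * ‖y‖^(n-a) := by rw [norm_mul, norm_pow, norm_pow]
    _ ≤ r^a * r^(n-a) := by
        apply mul_le_mul (pow_le_pow_left₀ (norm_nonneg x) hx a)
          (pow_le_pow_left₀ (norm_nonneg y) hy _) (pow_nonneg (norm_nonneg y) _)
          (pow_nonneg hr a)
    _ = r^n := by rw [← pow_add, Nat.add_sub_cancel' han]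

private lemma stmt15_norm_eq {a b : K} (h : ‖a + b‖ < ‖b‖) : ‖a‖ = ‖b‖ := by
  have h1 : ‖a‖ ≤ max ‖a + b‖ ‖b‖ := by
    have := norm_add_le_max (a + b) (-b)
    simpa using this
  have h1' : ‖a‖ ≤ ‖b‖ := h1.trans (max_le h.le le_rfl)
  rcases eq_or_lt_of_le h1' with he | hlt
  · exact he
  · have h2 : ‖b‖ ≤ max ‖a + b‖ ‖a‖ := by
      have := norm_add_le_max (a + b) (-a)
      simpa [add_comm] using this
    have h3 : max ‖a + b‖ ‖a‖ < ‖b‖ := max_lt h hlt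
    linarith

private lemma stmt15_pair {e : ℕ → K} {x y : K} (hxy : x ≠ y)
    (hx : HasSum (fun i => e i * x^(2*i+1)) 0) (hy : HasSum (fun i => e i * y^(2*i+1)) 0) :
    HasSum (fun i => e i * ∑ a ∈ range (2*i+1), x^a * y^(2*i-a)) 0 := by
  have h := hx.sub hy
  rw [sub_zero] at h
  have heq : (fun i => e i * x^(2*i+1) - e i * y^(2*i+1))
      = fun i => (x - y) * (e i * ∑ a ∈ range (2*i+1), x^a * y^(2*i-a)) := by
    funext i
    have hg := geom_sum₂_mul x y (2*i+1)
    have : ∑ a ∈ range (2*i+1), x^a * y^(2*i+1-1-a) = ∑ a ∈ range (2*i+1), x^a * y^(2*i-a) := by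
      apply Finset.sum_congr rfl
      intro a _
      congr 1
    rw [this] at hg
    rw [← mul_sub, ← hg]
    ring
  rw [heq] at h
  have h2 := h.mul_left (x - y)⁻¹
  rw [mul_zero] at h2
  have h3 : (fun i => (x - y)⁻¹ * ((x - y) * (e i * ∑ a ∈ range (2*i+1), x^a * y^(2*i-a))))
      = fun i => e i * ∑ a ∈ range (2*i+1), x^a * y^(2*i-a) := by
    funext i
    rw [inv_mul_cancel_left₀ (sub_ne_zero.mpr hxy)]
  rwa [h3] at h2

private lemma stmt15_norm_three : ‖(3:K)‖ = 3⁻¹ := by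
  have := Padic.norm_p (p := 3)
  have h3 : ((3:ℕ):K) = (3:K) := by norm_num
  rw [h3] at this
  rw [this]
  norm_num

private lemma stmt15_norm_two : ‖(2:K)‖ = 1 := by
  have := stmt15_nat_norm_one (t := 2) (by norm_num)
  have h2 : ((2:ℕ):K) = (2:K) := by norm_num
  rwa [h2] at this

private lemma stmt15_real_aux {r : ℝ} (hr0 : 0 ≤ r) (hr : r ≤ 3⁻¹) (j a : ℕ) :
    (3:ℝ)^(2*j+1) * r^(2*j+2+a) ≤ 3⁻¹ * r^a := by
  have h1 : r^(2*j+2+a) = r^(2*j+2) * r^a := pow_add r _ a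
  have h2 : r^(2*j+2) ≤ (3⁻¹:ℝ)^(2*j+2) := pow_le_pow_left₀ hr0 hr _
  have h3 : (3:ℝ)^(2*j+1) * (3⁻¹:ℝ)^(2*j+2) = 3⁻¹ := by
    rw [pow_succ (3⁻¹:ℝ), ← mul_assoc, ← mul_pow]
    norm_num
  calc (3:ℝ)^(2*j+1) * r^(2*j+2+a) = ((3:ℝ)^(2*j+1) * r^(2*j+2)) * r^a := by rw [h1]; ring
    _ ≤ ((3:ℝ)^(2*j+1) * (3⁻¹:ℝ)^(2*j+2)) * r^a := by
        apply mul_le_mul_of_nonneg_right _ (pow_nonneg hr0 a)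
        exact mul_le_mul_of_nonneg_left h2 (by positivity)
    _ = 3⁻¹ * r^a := by rw [h3]

private lemma stmt15_coeff_bound (c : ℕ → ℤ_[3]) (j : ℕ) :
    ‖((c (j+2) : K) / (2 * ((j+2 : ℕ):K) + 1))‖ ≤ (3:ℝ)^(2*j+1) := by
  rw [norm_div]
  have hc : ‖(c (j+2) : K)‖ ≤ 1 := (c (j+2)).2
  have hden : (2 * ((j+2:ℕ):K) + 1) = ((2*(j+2)+1 : ℕ) : K) := by push_cast; ring
  rw [hden]
  have hb := stmt15_den_bound j
  have hpos : (0:ℝ) < (3:ℝ)^(-((2*j+1:ℕ):ℤ)) := by positivity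
  have hinv : ‖((2*(j+2)+1 : ℕ) : K)‖⁻¹ ≤ ((3:ℝ)^(-((2*j+1:ℕ):ℤ)))⁻¹ :=
    inv_anti₀ hpos hb
  have heq : ((3:ℝ)^(-((2*j+1:ℕ):ℤ)))⁻¹ = (3:ℝ)^(2*j+1) := by
    rw [← zpow_neg, neg_neg, zpow_natCast]
  calc ‖(c (j+2):K)‖ / ‖((2*(j+2)+1:ℕ):K)‖
      ≤ 1 * ((3:ℝ)^(-((2*j+1:ℕ):ℤ)))⁻¹ := by
        rw [div_eq_mul_inv]
        exact mul_le_mul hc hinv (by positivity) zero_le_one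
    _ = (3:ℝ)^(2*j+1) := by rw [one_mul, heq]

private lemma stmt15_step1 {c : ℕ → ℤ_[3]} (hc1 : ‖(c 1 : K)‖ = 1) {u : ℤ_[3]}
    (hu : ‖(u:K)‖ ≤ 3⁻¹) (hu0 : (u:K) ≠ 0)
    (hsum : HasSum (fun i : ℕ => ((c i : K) / (2 * (i:K) + 1)) * (u:K) ^ (2*i+1)) 0) :
    ‖(c 0 : K)‖ = 3 * ‖(u:K)‖^2 := by
  set r := ‖(u:K)‖ with hr
  have hr0 : 0 < r := norm_pos_iff.mpr hu0
  set f := fun i : ℕ => ((c i : K) / (2 * (i:K) + 1)) * (u:K) ^ (2*i+1) with hf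
  have htail : ∀ j, ‖f (j+2)‖ ≤ 3⁻¹ * r^3 := by
    intro j
    have h1 : ‖f (j+2)‖ ≤ (3:ℝ)^(2*j+1) * r^(2*(j+2)+1) := by
      rw [hf]
      simp only [norm_mul, norm_pow]
      apply mul_le_mul_of_nonneg_right _ (pow_nonneg hr0.le _)
      exact_mod_cast stmt15_coeff_bound c j
    refine h1.trans ?_
    have h2 : 2*(j+2)+1 = 2*j+2+3 := by ring
    rw [h2]
    exact stmt15_real_aux hr0.le hu j 3
  have hB := stmt15_tail f (by positivity) hsum htail
  have hf0 : f 0 = (c 0 : K) * (u:K) := by simp [hf]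
  have hf1 : f 1 = ((c 1 : K) / 3) * (u:K)^3 := by
    have : (2 * ((1:ℕ):K) + 1) = (3:K) := by norm_num
    simp only [hf, this]
  have hnf1 : ‖f 1‖ = 3 * r^3 := by
    rw [hf1, norm_mul, norm_div, stmt15_norm_three, norm_pow, hc1, hr]
    norm_num
  have hlt : ‖f 0 + f 1‖ < ‖f 1‖ := by
    rw [hnf1]
    refine lt_of_le_of_lt hB ?_
    have : (0:ℝ) < r^3 := by positivity
    nlinarith
  have heq := stmt15_norm_eq hlt
  rw [hf0, hnf1, norm_mul] at heq
  have : ‖(c 0 : K)‖ * r = (3 * r^2) * r := by rw [heq]; ring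
  exact mul_right_cancel₀ hr0.ne' this

private lemma stmt15_step0 {c : ℕ → ℤ_[3]} {u v : ℤ_[3]}
    (hu : ‖(u:K)‖ ≤ 3⁻¹) (hv : ‖(v:K)‖ ≤ 3⁻¹)
    (h1 : HasSum (fun i : ℕ => ((c i : K) / (2 * (i:K) + 1)) *
      ∑ a ∈ range (2*i+1), (u:K)^a * (v:K)^(2*i-a)) 0) :
    ‖(c 0 : K)‖ ≤ 3⁻¹ := by
  set f := fun i : ℕ => ((c i : K) / (2 * (i:K) + 1)) *
      ∑ a ∈ range (2*i+1), (u:K)^a * (v:K)^(2*i-a) with hf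
  have htail : ∀ j, ‖f (j+2)‖ ≤ 3⁻¹ * (3⁻¹:ℝ)^2 := by
    intro j
    have hS : ‖∑ a ∈ range (2*(j+2)+1), (u:K)^a * (v:K)^(2*(j+2)-a)‖ ≤ (3⁻¹:ℝ)^(2*(j+2)) :=
      stmt15_S_norm hu hv (2*(j+2))
    have h1' : ‖f (j+2)‖ ≤ (3:ℝ)^(2*j+1) * (3⁻¹:ℝ)^(2*(j+2)) := by
      rw [hf]
      simp only [norm_mul]
      apply mul_le_mul (by exact_mod_cast stmt15_coeff_bound c j) hS (norm_nonneg _) (by positivity)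
    refine h1'.trans ?_
    have h2 : 2*(j+2) = 2*j+2+2 := by ring
    rw [h2]
    exact stmt15_real_aux (by norm_num) (le_refl _) j 2
  have hB := stmt15_tail f (by positivity) h1 htail
  have hf0 : f 0 = (c 0 : K) := by simp [hf]
  have hnf1 : ‖f 1‖ ≤ 3⁻¹ := by
    have h3 : (2 * ((1:ℕ):K) + 1) = (3:K) := by norm_num
    have hS : ‖∑ a ∈ range (2*1+1), (u:K)^a * (v:K)^(2*1-a)‖ ≤ (3⁻¹:ℝ)^(2*1) :=
      stmt15_S_norm hu hv (2*1)
    have : ‖f 1‖ ≤ 3 * (3⁻¹:ℝ)^(2*1) := by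
      rw [hf]
      simp only [norm_mul, h3]
      apply mul_le_mul _ hS (norm_nonneg _) (by norm_num)
      rw [norm_div, stmt15_norm_three, div_eq_mul_inv, inv_inv]
      nlinarith [(c 1).2, norm_nonneg ((c 1 : K))]
    refine this.trans (by norm_num)
  have hmax : ‖f 0 + f 1‖ ⊔ ‖f 1‖ ≤ 3⁻¹ := max_le (hB.trans (by norm_num)) hnf1
  have h := norm_add_le_max (f 0 + f 1) (-(f 1))
  simp only [add_neg_cancel_right, norm_neg] at h
  rw [← hf0]
  exact h.trans hmax

private lemma stmt15_norm_sub_le_max (x y : K) : ‖x - y‖ ≤ max ‖x‖ ‖y‖ := by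
  have := norm_add_le_max x (-y)
  simpa [sub_eq_add_neg] using this

private lemma stmt15_step2 {c : ℕ → ℤ_[3]} (hc1 : ‖(c 1 : K)‖ = 1) {u v : ℤ_[3]}
    (hu : ‖(u:K)‖ ≤ 3⁻¹) (hveq : ‖(v:K)‖ = ‖(u:K)‖) (hu0 : (u:K) ≠ 0)
    (h1 : HasSum (fun i : ℕ => ((c i : K) / (2 * (i:K) + 1)) *
      ∑ a ∈ range (2*i+1), (u:K)^a * (v:K)^(2*i-a)) 0)
    (h2 : HasSum (fun i : ℕ => ((c i : K) / (2 * (i:K) + 1)) *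
      ∑ a ∈ range (2*i+1), (u:K)^a * (-(v:K))^(2*i-a)) 0) :
    False := by
  set r := ‖(u:K)‖ with hr
  have hr0 : 0 < r := norm_pos_iff.mpr hu0
  have hg := h1.sub h2
  rw [sub_zero] at hg
  set g := fun i : ℕ => ((c i : K) / (2 * (i:K) + 1)) *
      ∑ a ∈ range (2*i+1), (u:K)^a * (v:K)^(2*i-a) -
      ((c i : K) / (2 * (i:K) + 1)) *
      ∑ a ∈ range (2*i+1), (u:K)^a * (-(v:K))^(2*i-a) with hgdef
  have htail : ∀ j, ‖g (j+2)‖ ≤ 3⁻¹ * r^2 := by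
    intro j
    have hxu : ‖(u:K)‖ ≤ r := hr.ge
    have hS1 : ‖∑ a ∈ range (2*(j+2)+1), (u:K)^a * (v:K)^(2*(j+2)-a)‖ ≤ r^(2*(j+2)) :=
      stmt15_S_norm hxu (hveq.trans hr.symm).le (2*(j+2))
    have hS2 : ‖∑ a ∈ range (2*(j+2)+1), (u:K)^a * (-(v:K))^(2*(j+2)-a)‖ ≤ r^(2*(j+2)) := by
      refine stmt15_S_norm hxu ?_ (2*(j+2))
      rw [norm_neg]
      exact (hveq.trans hr.symm).le
    have hco : ‖((c (j+2) : K) / (2 * ((j+2:ℕ):K) + 1))‖ ≤ (3:ℝ)^(2*j+1) :=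
      stmt15_coeff_bound c j
    have hb1 : ‖((c (j+2) : K) / (2 * ((j+2:ℕ):K) + 1)) *
        ∑ a ∈ range (2*(j+2)+1), (u:K)^a * (v:K)^(2*(j+2)-a)‖ ≤ 3⁻¹ * r^2 := by
      rw [norm_mul]
      calc ‖((c (j+2) : K) / (2 * ((j+2:ℕ):K) + 1))‖ * ‖∑ a ∈ range (2*(j+2)+1), (u:K)^a * (v:K)^(2*(j+2)-a)‖
          ≤ (3:ℝ)^(2*j+1) * r^(2*(j+2)) :=
            mul_le_mul hco hS1 (norm_nonneg _) (by positivity)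
        _ ≤ 3⁻¹ * r^2 := by
            have h2' : 2*(j+2) = 2*j+2+2 := by ring
            rw [h2']
            exact stmt15_real_aux hr0.le (hr ▸ hu) j 2
    have hb2 : ‖((c (j+2) : K) / (2 * ((j+2:ℕ):K) + 1)) *
        ∑ a ∈ range (2*(j+2)+1), (u:K)^a * (-(v:K))^(2*(j+2)-a)‖ ≤ 3⁻¹ * r^2 := by
      rw [norm_mul]
      calc ‖((c (j+2) : K) / (2 * ((j+2:ℕ):K) + 1))‖ * ‖∑ a ∈ range (2*(j+2)+1), (u:K)^a * (-(v:K))^(2*(j+2)-a)‖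
          ≤ (3:ℝ)^(2*j+1) * r^(2*(j+2)) :=
            mul_le_mul hco hS2 (norm_nonneg _) (by positivity)
        _ ≤ 3⁻¹ * r^2 := by
            have h2' : 2*(j+2) = 2*j+2+2 := by ring
            rw [h2']
            exact stmt15_real_aux hr0.le (hr ▸ hu) j 2
    exact (stmt15_norm_sub_le_max
      (((c (j+2) : K) / (2 * ((j+2:ℕ):K) + 1)) *
        ∑ a ∈ range (2*(j+2)+1), (u:K)^a * (v:K)^(2*(j+2)-a))
      (((c (j+2) : K) / (2 * ((j+2:ℕ):K) + 1)) *
        ∑ a ∈ range (2*(j+2)+1), (u:K)^a * (-(v:K))^(2*(j+2)-a))).trans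
      (max_le hb1 hb2)
  have hB := stmt15_tail g (by positivity) hg htail
  have hg0 : g 0 = 0 := by simp [hgdef]
  have hg1 : g 1 = ((c 1 : K)/3) * (2 * (u:K) * (v:K)) := by
    have h3 : (2 * ((1:ℕ):K) + 1) = (3:K) := by norm_num
    simp only [hgdef, h3, Finset.sum_range_succ, Finset.sum_range_one]
    norm_num
    ring
  rw [hg0, zero_add, hg1] at hB
  have hnn : ‖((c 1 : K)/3) * (2 * (u:K) * (v:K))‖ = 3 * (r * r) := by
    rw [norm_mul, norm_div, stmt15_norm_three, hc1, norm_mul, norm_mul, stmt15_norm_two, hveq]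
    norm_num
    left
    rfl
  rw [hnn] at hB
  nlinarith

/-- Let `F(z) = a₀z + (a₂/3)z³ + (a₄/5)z⁵ + ⋯` with coefficients `a_{2i} ∈ ℤ₃`
(here `c i = a_{2i}`), converging on `3ℤ₃`, and suppose `a₀` or `a₂` is a unit.
Then `F` has at most three zeroes in the disc `3ℤ₃`. -/
theorem stmt15 (c : ℕ → ℤ_[3]) (F : ℤ_[3] → ℚ_[3])
    (hconv : ∀ z : ℤ_[3], (∃ w, z = 3 * w) →
      HasSum (fun i : ℕ => ((c i : ℚ_[3]) / (2 * i + 1)) * (z : ℚ_[3]) ^ (2 * i + 1)) (F z))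
    (hunit : IsUnit (c 0) ∨ IsUnit (c 1)) :
    ∀ s : Finset ℤ_[3], (∀ z ∈ s, (∃ w, z = 3 * w) ∧ F z = 0) → s.card ≤ 3 := by
  intro s hs
  classical
  by_contra hcard
  push_neg at hcard
  have hZ : ∀ z ∈ s, HasSum (fun i : ℕ => ((c i : K) / (2 * (i:K) + 1)) * (z:K) ^ (2*i+1)) 0 := by
    intro z hz
    have h := hconv z (hs z hz).1
    rwa [(hs z hz).2] at h
  have hnorm : ∀ z ∈ s, ‖(z:K)‖ ≤ 3⁻¹ := by
    intro z hz
    obtain ⟨w, hw⟩ := (hs z hz).1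
    have hzw : (z:K) = 3 * (w:K) := by
      rw [hw]
      push_cast
      norm_num
      left
      norm_cast
    rw [hzw, norm_mul, stmt15_norm_three]
    nlinarith [norm_nonneg ((w:K)), w.2]
  rcases hunit with hc0 | hc1
  · have hc0' : ‖(c 0 : K)‖ = 1 := by
      rw [← PadicInt.norm_def]; exact PadicInt.isUnit_iff.mp hc0
    obtain ⟨a, ha, b, hb, hab⟩ := Finset.one_lt_card.mp (show 1 < s.card by omega)
    have hne : (a:K) ≠ (b:K) := fun h => hab (Subtype.coe_injective h)
    have hpair := stmt15_pair hne (hZ a ha) (hZ b hb)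
    have hle := stmt15_step0 (hnorm a ha) (hnorm b hb) hpair
    rw [hc0'] at hle
    norm_num at hle
  · have hc1' : ‖(c 1 : K)‖ = 1 := by
      rw [← PadicInt.norm_def]; exact PadicInt.isUnit_iff.mp hc1
    have main : ∀ u v : ℤ_[3], u ∈ s → v ∈ s → u ≠ 0 → v ≠ 0 → u ≠ v → u ≠ -v → False := by
      intro u v hus hvs hu0 hv0 huv huv'
      have hu0' : (u:K) ≠ 0 := (PadicInt.coe_ne_zero (x := u)).mpr hu0
      have hv0' : (v:K) ≠ 0 := (PadicInt.coe_ne_zero (x := v)).mpr hv0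
      have hru : ‖(u:K)‖ ≤ 3⁻¹ := hnorm u hus
      have hrv : ‖(v:K)‖ ≤ 3⁻¹ := hnorm v hvs
      have hsu := hZ u hus
      have hsv := hZ v hvs
      have hsnv : HasSum (fun i : ℕ => ((c i:K)/(2*(i:K)+1)) * (-(v:K))^(2*i+1)) 0 := by
        have hneg := hsv.neg
        rw [neg_zero] at hneg
        have heq : (fun i : ℕ => ((c i:K)/(2*(i:K)+1)) * (-(v:K))^(2*i+1))
            = fun i : ℕ => -(((c i:K)/(2*(i:K)+1)) * (v:K)^(2*i+1)) := by
          funext i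
          rw [Odd.neg_pow ⟨i, by ring⟩]
          ring
        rw [heq]
        exact hneg
      have h1 := stmt15_step1 hc1' hru hu0' hsu
      have h2 := stmt15_step1 hc1' hrv hv0' hsv
      have hveq : ‖(v:K)‖ = ‖(u:K)‖ := by
        have hsq : ‖(v:K)‖^2 = ‖(u:K)‖^2 := by linarith
        calc ‖(v:K)‖ = Real.sqrt (‖(v:K)‖^2) := (Real.sqrt_sq (norm_nonneg _)).symm
          _ = Real.sqrt (‖(u:K)‖^2) := by rw [hsq]
          _ = ‖(u:K)‖ := Real.sqrt_sq (norm_nonneg _)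
      have hne1 : (u:K) ≠ (v:K) := fun h => huv (Subtype.coe_injective h)
      have hne2 : (u:K) ≠ -(v:K) := by
        intro h
        apply huv'
        apply Subtype.coe_injective
        push_cast
        exact_mod_cast h
      have hp1 := stmt15_pair hne1 hsu hsv
      have hp2 := stmt15_pair hne2 hsu hsnv
      exact stmt15_step2 hc1' hru hveq hu0' hp1 hp2
    have hcard2 : 3 ≤ (s.erase 0).card := by
      by_cases h0 : (0:ℤ_[3]) ∈ s
      · rw [Finset.card_erase_of_mem h0]; omega
      · rw [Finset.erase_eq_of_notMem h0]; omega
    obtain ⟨t, hts, htcard⟩ := Finset.exists_subset_card_eq hcard2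
    obtain ⟨x, y, z, hxy, hxz, hyz, hteq⟩ := Finset.card_eq_three.mp htcard
    rw [hteq] at hts
    have hmem : ∀ w ∈ ({x, y, z} : Finset ℤ_[3]), w ∈ s ∧ w ≠ 0 := by
      intro w hw
      have hw' := hts hw
      exact ⟨Finset.mem_of_mem_erase hw', Finset.ne_of_mem_erase hw'⟩
    have hx := hmem x (by simp)
    have hy := hmem y (by simp)
    have hz := hmem z (by simp)
    by_cases hcase : y = -x
    · refine main x z hx.1 hz.1 hx.2 hz.2 hxz ?_
      intro h
      apply hyz
      rw [hcase, h]
      ring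
    · refine main x y hx.1 hy.1 hx.2 hy.2 hxy ?_
      intro h
      apply hcase
      rw [h]
      ring
end
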